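/- arXiv:2108.12679 — 7 statements merged into one kernel-verified Lean document; each statement's English description precedes it below -/
import Mathlib

section
/- Let (Λ_0, Λ_1, ..., Λ_l) be a tuple of Laurent polynomials over ℤ_p, and define W_s(x) = Λ_0(x)·Λ_1(x)^p···Λ_s(x)^(p^s) and W_s^(j)(x) = Λ_j(x)·Λ_{j+1}(x)^p···Λ_s(x)^(p^(s-j)). Define the ghost polynomials V_s recursively by V_s(x) = W_s(x) - Σ_{j=1}^{s} V_{j-1}(x)·W_s^(j)(x^(p^j)). Then for each 0 ≤ s ≤ l, all coefficients of V_s are divisible by p^s. -/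
open AddMonoidAlgebra

/-- Laurent polynomials in variables indexed by `σ` with coefficients in `R`. -/
abbrev MvLaurent (R : Type*) [CommRing R] (σ : Type*) : Type _ :=
  AddMonoidAlgebra R (σ →₀ ℤ)

/-- The substitution `x ↦ x^q` on Laurent polynomials (scaling all exponents by `q`). -/
noncomputable def frobSubst (R : Type*) [CommRing R] (σ : Type*) (q : ℕ) :
    MvLaurent R σ →+* MvLaurent R σ :=
  AddMonoidAlgebra.mapDomainRingHom R
    (DistribMulAction.toAddMonoidHom (σ →₀ ℤ) (q : ℤ))

/-- `Wseg p Λ j s = Λ_j · Λ_{j+1}^p ··· Λ_s^(p^(s-j))` (for `j ≤ s`);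
in particular `Wseg p Λ 0 s = W_s = Λ_0 · Λ_1^p ··· Λ_s^(p^s)`. -/
noncomputable def Wseg {R : Type*} [CommRing R] {σ : Type*} (p : ℕ)
    (Λ : ℕ → MvLaurent R σ) (j s : ℕ) : MvLaurent R σ :=
  ∏ i ∈ Finset.range (s - j + 1), Λ (j + i) ^ p ^ i

section Aux
variable {p : ℕ} [hp : Fact p.Prime] {σ : Type*}

lemma frobSubst_apply (q : ℕ) (f : MvLaurent ℤ_[p] σ) :
    frobSubst ℤ_[p] σ q f = AddMonoidAlgebra.mapDomain (fun e => (q : ℤ) • e) f := rfl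

lemma frobSubst_single (q : ℕ) (a : σ →₀ ℤ) (b : ℤ_[p]) :
    frobSubst ℤ_[p] σ q (AddMonoidAlgebra.single a b) = AddMonoidAlgebra.single ((q : ℤ) • a) b := by
  rw [frobSubst_apply]
  exact AddMonoidAlgebra.mapDomain_single

lemma frobSubst_one_apply (f : MvLaurent ℤ_[p] σ) : frobSubst ℤ_[p] σ 1 f = f := by
  rw [frobSubst_apply]
  have : (fun e : σ →₀ ℤ => ((1 : ℕ) : ℤ) • e) = id := by ext e : 1; simp
  rw [this]
  exact AddMonoidAlgebra.coeff_injective Finsupp.mapDomain_id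

lemma frobSubst_comp (q r : ℕ) (f : MvLaurent ℤ_[p] σ) :
    frobSubst ℤ_[p] σ q (frobSubst ℤ_[p] σ r f) = frobSubst ℤ_[p] σ (q * r) f := by
  rw [frobSubst_apply, frobSubst_apply, frobSubst_apply]
  apply AddMonoidAlgebra.coeff_injective
  change Finsupp.mapDomain _ (Finsupp.mapDomain _ f.coeff) = Finsupp.mapDomain _ f.coeff
  rw [← Finsupp.mapDomain_comp]
  congr 1
  ext e : 1
  simp [mul_smul, mul_comm]

lemma dvd_single_of_dvd (a : σ →₀ ℤ) {c : ℤ_[p]} (h : (p : ℤ_[p]) ∣ c) :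
    (p : MvLaurent ℤ_[p] σ) ∣ (AddMonoidAlgebra.single a c : MvLaurent ℤ_[p] σ) := by
  obtain ⟨d, rfl⟩ := h
  exact ⟨AddMonoidAlgebra.single a d, by
    rw [AddMonoidAlgebra.natCast_def, AddMonoidAlgebra.single_mul_single, zero_add]⟩

lemma fermat_padic (b : ℤ_[p]) : (p : ℤ_[p]) ∣ b ^ p - b := by
  rw [← Ideal.mem_span_singleton, ← PadicInt.maximalIdeal_eq_span_p,
    ← PadicInt.ker_toZMod, RingHom.mem_ker, map_sub, map_pow, ZMod.pow_card, sub_self]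

private lemma ring_rearrange {R : Type*} [CommRing R] (x x' y y' pr : R) :
    x + y - (x' + y' + pr) = (x - x') + (y - y') - pr := by ring

lemma frob_p_congr (f : MvLaurent ℤ_[p] σ) :
    (p : MvLaurent ℤ_[p] σ) ∣ frobSubst ℤ_[p] σ p f - f ^ p := by
  induction f using AddMonoidAlgebra.induction with
  | zero => simp [zero_pow hp.out.ne_zero]
  | single_add a b g ha hb ih =>
    obtain ⟨r, hr⟩ := exists_add_pow_prime_eq (R := MvLaurent ℤ_[p] σ) hp.out
      (AddMonoidAlgebra.single a b) g
    have hsp : AddMonoidAlgebra.single a b ^ p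
        = AddMonoidAlgebra.single ((p : ℤ) • a) (b ^ p) := by
      rw [AddMonoidAlgebra.single_pow, natCast_zsmul]
    rw [map_add, hr, frobSubst_single, hsp, ring_rearrange]
    have hsub : AddMonoidAlgebra.single ((p : ℤ) • a) b
          - AddMonoidAlgebra.single ((p : ℤ) • a) (b ^ p)
        = (AddMonoidAlgebra.single ((p : ℤ) • a) (b - b ^ p) : MvLaurent ℤ_[p] σ) :=
      (AddMonoidAlgebra.single_sub _ _ _).symm
    rw [hsub]
    exact dvd_sub (dvd_add (dvd_single_of_dvd _ (dvd_sub_comm.mp (fermat_padic b))) ih)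
      (by rw [mul_assoc, mul_assoc]; exact dvd_mul_right _ _)

lemma frob_pow_congr (j : ℕ) (f : MvLaurent ℤ_[p] σ) :
    (p : MvLaurent ℤ_[p] σ) ∣ frobSubst ℤ_[p] σ (p ^ j) f - f ^ (p ^ j) := by
  induction j with
  | zero => simp [frobSubst_one_apply]
  | succ j ih =>
    have h1 : frobSubst ℤ_[p] σ (p ^ (j + 1)) f
        = frobSubst ℤ_[p] σ p (frobSubst ℤ_[p] σ (p ^ j) f) := by
      rw [frobSubst_comp, ← pow_succ']
    have h2 : (p : MvLaurent ℤ_[p] σ) ∣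
        (frobSubst ℤ_[p] σ (p ^ j) f) ^ p - (f ^ (p ^ j)) ^ p :=
      dvd_trans ih (sub_dvd_pow_sub_pow _ _ p)
    have h3 := frob_p_congr (frobSubst ℤ_[p] σ (p ^ j) f)
    have : frobSubst ℤ_[p] σ (p ^ (j + 1)) f - f ^ p ^ (j + 1)
        = (frobSubst ℤ_[p] σ p (frobSubst ℤ_[p] σ (p ^ j) f)
            - (frobSubst ℤ_[p] σ (p ^ j) f) ^ p)
          + ((frobSubst ℤ_[p] σ (p ^ j) f) ^ p - (f ^ (p ^ j)) ^ p) := by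
      rw [h1, ← pow_mul, ← pow_succ]
      ring
    rw [this]
    exact dvd_add h3 h2

end Aux

/-- if `V` satisfies the ghost recursion
`V_s = W_s - Σ_{j=1}^s V_{j-1}(x) · W_s^(j)(x^{p^j})` for all `s ≤ l`, then every
coefficient of `V_s` is divisible by `p^s` for `0 ≤ s ≤ l`. -/
theorem ghost_coefficients_divisible (p : ℕ) (hp : p.Prime) [Fact p.Prime]
    (σ : Type*) (l : ℕ) (Λ V : ℕ → MvLaurent ℤ_[p] σ)
    (hV : ∀ s ≤ l, V s =
      Wseg p Λ 0 s -
        ∑ j ∈ Finset.Icc 1 s,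
          V (j - 1) * frobSubst ℤ_[p] σ (p ^ j) (Wseg p Λ j s)) :
    ∀ s ≤ l, ∀ e : σ →₀ ℤ, (p : ℤ_[p]) ^ s ∣ (V s).coeff e := by
  have key : ∀ s, s ≤ l → (p : MvLaurent ℤ_[p] σ) ^ s ∣ V s := by
    intro s
    induction s using Nat.strong_induction_on with
    | _ s ih =>
      intro hs
      rcases s with _ | n
      · exact pow_zero (p : MvLaurent ℤ_[p] σ) ▸ one_dvd _
      · set A : MvLaurent ℤ_[p] σ := Λ (n+1) ^ p ^ (n+1) with hA
        set B : MvLaurent ℤ_[p] σ := frobSubst ℤ_[p] σ (p ^ (n+1)) (Λ (n+1)) with hB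
        have hW0 : Wseg p Λ 0 (n+1) = Wseg p Λ 0 n * A := by
          simp [Wseg, Finset.prod_range_succ, hA]
        have hWj : ∀ j ∈ Finset.Icc 1 n,
            Wseg p Λ j (n+1) = Wseg p Λ j n * Λ (n+1) ^ p ^ (n - j + 1) := by
          intro j hj
          simp only [Finset.mem_Icc] at hj
          have h1 : (n+1) - j + 1 = (n - j + 1) + 1 := by omega
          have e1 : j + (n - j + 1) = n + 1 := by omega
          simp only [Wseg, h1, Finset.prod_range_succ, e1]
        have hlastW : Wseg p Λ (n+1) (n+1) = Λ (n+1) := by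
          simp [Wseg]
        have hsum : ∑ j ∈ Finset.Icc 1 n,
              V (j-1) * frobSubst ℤ_[p] σ (p^j) (Wseg p Λ j (n+1))
            = ∑ j ∈ Finset.Icc 1 n, V (j-1) *
                (frobSubst ℤ_[p] σ (p^j) (Wseg p Λ j n) *
                  (frobSubst ℤ_[p] σ (p^j) (Λ (n+1))) ^ p ^ (n - j + 1)) := by
          refine Finset.sum_congr rfl fun j hj => ?_
          rw [hWj j hj, map_mul, map_pow]
        have hstep : V (n+1) = Wseg p Λ 0 n * A
            - (∑ j ∈ Finset.Icc 1 n, V (j-1) *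
                (frobSubst ℤ_[p] σ (p^j) (Wseg p Λ j n) *
                  (frobSubst ℤ_[p] σ (p^j) (Λ (n+1))) ^ p ^ (n - j + 1)))
            - V n * B := by
          rw [hV (n+1) hs, Finset.sum_Icc_succ_top (by omega : 1 ≤ n+1), hsum, hW0, hlastW]
          simp only [Nat.add_sub_cancel, ← hB]
          ring
        have hSig : ∑ j ∈ Finset.Icc 1 n,
              V (j-1) * frobSubst ℤ_[p] σ (p^j) (Wseg p Λ j n)
            = Wseg p Λ 0 n - V n := by
          rw [hV n (by omega)]; ring
        have hdecomp : V (n+1) = V n * (A - B)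
            + ∑ j ∈ Finset.Icc 1 n,
                (V (j-1) * frobSubst ℤ_[p] σ (p^j) (Wseg p Λ j n)) *
                  (A - (frobSubst ℤ_[p] σ (p^j) (Λ (n+1))) ^ p ^ (n - j + 1)) := by
          rw [hstep]
          have expand : ∑ j ∈ Finset.Icc 1 n,
                (V (j-1) * frobSubst ℤ_[p] σ (p^j) (Wseg p Λ j n)) *
                  (A - (frobSubst ℤ_[p] σ (p^j) (Λ (n+1))) ^ p ^ (n - j + 1))
              = (∑ j ∈ Finset.Icc 1 n,
                  V (j-1) * frobSubst ℤ_[p] σ (p^j) (Wseg p Λ j n)) * A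
                - ∑ j ∈ Finset.Icc 1 n, V (j-1) *
                    (frobSubst ℤ_[p] σ (p^j) (Wseg p Λ j n) *
                      (frobSubst ℤ_[p] σ (p^j) (Λ (n+1))) ^ p ^ (n - j + 1)) := by
            rw [Finset.sum_mul, ← Finset.sum_sub_distrib]
            exact Finset.sum_congr rfl fun j _ => by ring
          rw [expand, hSig]
          ring
        rw [hdecomp]
        have hAB : (p : MvLaurent ℤ_[p] σ) ∣ A - B :=
          dvd_sub_comm.mp (frob_pow_congr (n+1) (Λ (n+1)))
        refine dvd_add ?_ (Finset.dvd_sum fun j hj => ?_)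
        · rw [pow_succ]
          exact mul_dvd_mul (ih n (by omega) (by omega)) hAB
        · simp only [Finset.mem_Icc] at hj
          have h1 : (p : MvLaurent ℤ_[p] σ) ^ (j-1) ∣
              V (j-1) * frobSubst ℤ_[p] σ (p^j) (Wseg p Λ j n) :=
            (ih (j-1) (by omega) (by omega)).mul_right _
          have base := frob_pow_congr (p := p) (σ := σ) j (Λ (n+1))
          have h2 := dvd_sub_pow_of_dvd_sub base (n - j + 1)
          push_cast at h2
          have hpow : ((Λ (n+1)) ^ (p^j)) ^ p ^ (n - j + 1) = A := by
            rw [hA, ← pow_mul, ← pow_add, show j + (n - j + 1) = n + 1 from by omega]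
          rw [hpow] at h2
          have h2' : (p : MvLaurent ℤ_[p] σ) ^ (n - j + 1 + 1) ∣
              A - (frobSubst ℤ_[p] σ (p^j) (Λ (n+1))) ^ p ^ (n - j + 1) :=
            dvd_sub_comm.mp h2
          have hexp : (p : MvLaurent ℤ_[p] σ) ^ (n + 1)
              = (p : MvLaurent ℤ_[p] σ) ^ (j - 1) * (p : MvLaurent ℤ_[p] σ) ^ (n - j + 1 + 1) := by
            rw [← pow_add]
            congr 1
            omega
          rw [hexp]
          exact mul_dvd_mul h1 h2'
  intro s hs e
  obtain ⟨g, hg⟩ := key s hs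
  refine ⟨g.coeff e, ?_⟩
  rw [hg]
  have hc : ((p : MvLaurent ℤ_[p] σ)) ^ s
      = AddMonoidAlgebra.single (0 : σ →₀ ℤ) ((p : ℤ_[p]) ^ s) := by
    rw [AddMonoidAlgebra.natCast_def, AddMonoidAlgebra.single_pow, smul_zero]
  rw [hc, AddMonoidAlgebra.coeff_single_zero_mul]
end

section
/- With notation as in the ghost construction, the Newton polytope (with respect to the t-variables) of the ghost polynomial V_s is contained in the Minkowski sum N(Λ_0) + p·N(Λ_1) + ... + p^s·N(Λ_s). -/
open AddMonoidAlgebra Pointwise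

/-- The Newton polytope of a Laurent polynomial in the variables `(t, z)`
(`t`-variables indexed by `Fin r`, `z`-variables by `Fin nz`) with respect to the
`t`-variables only: the convex hull in `ℝ^r` of the `t`-parts of the exponents in
the support. -/
noncomputable def newtonT {R : Type*} [CommRing R] {r nz : ℕ}
    (F : MvLaurent R (Fin r ⊕ Fin nz)) : Set (Fin r → ℝ) :=
  convexHull ℝ ((fun e : (Fin r ⊕ Fin nz) →₀ ℤ => fun i : Fin r => (e (Sum.inl i) : ℝ)) ''
    ↑F.coeff.support)

section Aux
variable {R : Type*} [CommRing R] {r nz : ℕ}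

/-- the projection map -/
noncomputable def tphi (r nz : ℕ) (e : (Fin r ⊕ Fin nz) →₀ ℤ) : Fin r → ℝ :=
  fun i => (e (Sum.inl i) : ℝ)

lemma tphi_add (a b : (Fin r ⊕ Fin nz) →₀ ℤ) : tphi r nz (a + b) = tphi r nz a + tphi r nz b := by
  funext i; simp [tphi]

lemma tphi_zero : tphi r nz 0 = 0 := by funext i; simp [tphi]

lemma tphi_smul (q : ℕ) (a : (Fin r ⊕ Fin nz) →₀ ℤ) :
    tphi r nz ((q : ℤ) • a) = (q : ℝ) • tphi r nz a := by
  funext i; simp [tphi]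

lemma newtonT_def (F : MvLaurent R (Fin r ⊕ Fin nz)) :
    newtonT F = convexHull ℝ (tphi r nz '' ↑F.coeff.support) := rfl

lemma convex_newtonT (F : MvLaurent R (Fin r ⊕ Fin nz)) : Convex ℝ (newtonT F) :=
  convex_convexHull ℝ _

lemma newtonT_subset {F : MvLaurent R (Fin r ⊕ Fin nz)} {C : Set (Fin r → ℝ)}
    (hC : Convex ℝ C) (h : ∀ e ∈ F.coeff.support, tphi r nz e ∈ C) : newtonT F ⊆ C := by
  rw [newtonT_def]
  refine convexHull_min ?_ hC
  rintro x ⟨e, he, rfl⟩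
  exact h e he

lemma mem_newtonT {F : MvLaurent R (Fin r ⊕ Fin nz)} {e : (Fin r ⊕ Fin nz) →₀ ℤ}
    (he : e ∈ F.coeff.support) : tphi r nz e ∈ newtonT F :=
  subset_convexHull ℝ _ ⟨e, he, rfl⟩

lemma newtonT_mul (F G : MvLaurent R (Fin r ⊕ Fin nz)) :
    newtonT (F * G) ⊆ newtonT F + newtonT G := by
  classical
  refine newtonT_subset ((convex_newtonT F).add (convex_newtonT G)) (fun e he => ?_)
  have := AddMonoidAlgebra.support_coeff_mul_subset F G he
  rw [Finset.mem_add] at this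
  obtain ⟨a, ha, b, hb, rfl⟩ := this
  rw [tphi_add]
  exact Set.add_mem_add (mem_newtonT ha) (mem_newtonT hb)

end Aux

section Aux2
variable {R : Type*} [CommRing R] {r nz : ℕ}

lemma newtonT_pow (F : MvLaurent R (Fin r ⊕ Fin nz)) {k : ℕ} (hk : 1 ≤ k) :
    newtonT (F ^ k) ⊆ (k : ℝ) • newtonT F := by
  obtain ⟨m, rfl⟩ := Nat.exists_eq_add_of_le hk
  induction m with
  | zero => simpa using subset_rfl
  | succ m ih =>
    have h1 : F ^ (1 + (m + 1)) = F ^ (1 + m) * F := by ring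
    have h2 : ((1 + m : ℕ) : ℝ) • newtonT F + (1 : ℝ) • newtonT F
        = ((1 + (m + 1) : ℕ) : ℝ) • newtonT F := by
      rw [← (convex_newtonT F).add_smul (by positivity) (by norm_num : (0:ℝ) ≤ 1)]
      congr 1
      push_cast; ring
    rw [h1]
    refine (newtonT_mul _ _).trans ?_
    rw [← h2]
    refine Set.add_subset_add (ih (by omega)) ?_
    rw [one_smul]

lemma newtonT_one : newtonT (1 : MvLaurent R (Fin r ⊕ Fin nz)) ⊆ 0 := by
  refine newtonT_subset (convex_singleton 0) (fun e he => ?_)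
  have : e ∈ ({0} : Finset _) :=
    Finsupp.support_single_subset (α := (Fin r ⊕ Fin nz) →₀ ℤ) he
  simp only [Finset.mem_singleton] at this
  subst this
  rw [tphi_zero]
  rfl

lemma newtonT_prod {ι : Type*} (s : Finset ι) (F : ι → MvLaurent R (Fin r ⊕ Fin nz)) :
    newtonT (∏ i ∈ s, F i) ⊆ ∑ i ∈ s, newtonT (F i) := by
  classical
  induction s using Finset.induction_on with
  | empty => simpa using newtonT_one
  | insert _ _ hx ih =>
    rw [Finset.prod_insert hx, Finset.sum_insert hx]
    exact (newtonT_mul _ _).trans (Set.add_subset_add subset_rfl ih)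

lemma newtonT_frob (q : ℕ) (F : MvLaurent R (Fin r ⊕ Fin nz)) :
    newtonT (frobSubst R (Fin r ⊕ Fin nz) q F) ⊆ (q : ℝ) • newtonT F := by
  classical
  refine newtonT_subset ((convex_newtonT F).smul _) (fun e he => ?_)
  have hsupp : (frobSubst R (Fin r ⊕ Fin nz) q F).coeff.support ⊆
      F.coeff.support.image (fun a => (q : ℤ) • a) := by
    exact Finsupp.mapDomain_support
  obtain ⟨a, ha, rfl⟩ := Finset.mem_image.mp (hsupp he)
  rw [tphi_smul]
  exact Set.smul_mem_smul_set (mem_newtonT ha)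

end Aux2

section Aux3
variable {R : Type*} [CommRing R] {r nz : ℕ}

lemma newtonT_sub_subset {F G : MvLaurent R (Fin r ⊕ Fin nz)} {C : Set (Fin r → ℝ)}
    (hC : Convex ℝ C) (hF : newtonT F ⊆ C) (hG : newtonT G ⊆ C) : newtonT (F - G) ⊆ C := by
  classical
  refine newtonT_subset hC (fun e he => ?_)
  rcases Finset.mem_union.mp (Finsupp.support_sub he) with h | h
  · exact hF (mem_newtonT h)
  · exact hG (mem_newtonT h)

lemma newtonT_finsetSum_subset {ι : Type*} {s : Finset ι}
    {G : ι → MvLaurent R (Fin r ⊕ Fin nz)} {C : Set (Fin r → ℝ)}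
    (hC : Convex ℝ C) (h : ∀ j ∈ s, newtonT (G j) ⊆ C) :
    newtonT (∑ j ∈ s, G j) ⊆ C := by
  classical
  refine newtonT_subset hC (fun e he => ?_)
  rw [AddMonoidAlgebra.coeff_sum] at he
  obtain ⟨j, hj, hje⟩ := Finset.mem_biUnion.mp (Finsupp.support_finset_sum he)
  exact h j hj (mem_newtonT hje)

lemma convex_setSum {ι : Type*} (s : Finset ι) (f : ι → Set (Fin r → ℝ))
    (h : ∀ i ∈ s, Convex ℝ (f i)) : Convex ℝ (∑ i ∈ s, f i) := by
  classical
  induction s using Finset.induction_on with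
  | empty => rw [Finset.sum_empty]; exact convex_singleton (𝕜 := ℝ) (0 : Fin r → ℝ)
  | @insert a s ha ih =>
    rw [Finset.sum_insert ha]
    exact (h a (Finset.mem_insert_self _ _)).add
      (ih (fun i hi => h i (Finset.mem_insert_of_mem hi)))

lemma setSum_mono {ι : Type*} (s : Finset ι) (f g : ι → Set (Fin r → ℝ))
    (h : ∀ i ∈ s, f i ⊆ g i) : ∑ i ∈ s, f i ⊆ ∑ i ∈ s, g i := by
  classical
  induction s using Finset.induction_on with
  | empty => simp
  | @insert a s ha ih =>
    rw [Finset.sum_insert ha, Finset.sum_insert ha]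
    exact Set.add_subset_add (h a (Finset.mem_insert_self _ _))
      (ih (fun i hi => h i (Finset.mem_insert_of_mem hi)))

lemma smul_setSum_subset {ι : Type*} (c : ℝ) (s : Finset ι) (f : ι → Set (Fin r → ℝ)) :
    c • ∑ i ∈ s, f i ⊆ ∑ i ∈ s, c • f i := by
  classical
  induction s using Finset.induction_on with
  | empty =>
    rintro x ⟨y, hy, rfl⟩
    simp only [Finset.sum_empty] at *
    rw [Set.mem_zero] at hy
    subst hy
    simp [Set.mem_zero]
  | @insert a s ha ih =>
    rw [Finset.sum_insert ha, Finset.sum_insert ha]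
    rintro x ⟨y, hy, rfl⟩
    obtain ⟨u, hu, v, hv, rfl⟩ := Set.mem_add.mp hy
    have : (fun x => c • x) (u + v) = c • u + c • v := smul_add c u v
    rw [this]
    exact Set.add_mem_add (Set.smul_mem_smul_set hu) (ih ⟨v, hv, rfl⟩)

lemma newtonT_Wseg (p : ℕ) (hp : 1 ≤ p) (Λ : ℕ → MvLaurent R (Fin r ⊕ Fin nz)) (j s : ℕ) :
    newtonT (Wseg p Λ j s) ⊆
      ∑ i ∈ Finset.range (s - j + 1), ((p : ℝ) ^ i) • newtonT (Λ (j + i)) := by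
  refine (newtonT_prod _ _).trans ?_
  refine setSum_mono _ _ _ (fun i _ => ?_)
  have h1 : ((p ^ i : ℕ) : ℝ) = (p : ℝ) ^ i := by push_cast; ring
  exact h1 ▸ newtonT_pow _ (Nat.one_le_pow _ _ hp)

end Aux3

/-- for the ghosts `V_s` (defined by the recursion
`V_s = W_s - Σ_{j=1}^s V_{j-1}(x)·W_s^{(j)}(x^{p^j})`), the Newton polytope with respect
to the `t`-variables satisfies `N(V_s) ⊆ N(Λ_0) + p·N(Λ_1) + ⋯ + p^s·N(Λ_s)`
(Minkowski sum of dilations). -/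
theorem ghost_newton_polytope (p : ℕ) (hp : p.Prime) [Fact p.Prime]
    (r nz : ℕ) (l : ℕ) (Λ V : ℕ → MvLaurent ℤ_[p] (Fin r ⊕ Fin nz))
    (hV : ∀ s ≤ l, V s =
      Wseg p Λ 0 s -
        ∑ j ∈ Finset.Icc 1 s,
          V (j - 1) * frobSubst ℤ_[p] (Fin r ⊕ Fin nz) (p ^ j) (Wseg p Λ j s)) :
    ∀ s ≤ l,
      newtonT (V s) ⊆ ∑ i ∈ Finset.range (s + 1), ((p : ℝ) ^ i) • newtonT (Λ i) := by
  intro s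
  induction s using Nat.strong_induction_on with
  | _ s ih =>
    intro hs
    rw [hV s hs]
    have hTconv : Convex ℝ (∑ i ∈ Finset.range (s + 1), ((p : ℝ) ^ i) • newtonT (Λ i)) :=
      convex_setSum _ _ (fun i _ => (convex_newtonT _).smul _)
    refine newtonT_sub_subset hTconv ?_ ?_
    · have h := newtonT_Wseg p hp.one_lt.le Λ 0 s
      simpa using h
    · refine newtonT_finsetSum_subset hTconv (fun j hj => ?_)
      obtain ⟨hj1, hjs⟩ := Finset.mem_Icc.mp hj
      refine (newtonT_mul _ _).trans ?_
      have hVj : newtonT (V (j - 1)) ⊆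
          ∑ i ∈ Finset.range ((j - 1) + 1), ((p : ℝ) ^ i) • newtonT (Λ i) :=
        ih (j - 1) (by omega) (by omega)
      have hfr : newtonT (frobSubst ℤ_[p] (Fin r ⊕ Fin nz) (p ^ j) (Wseg p Λ j s)) ⊆
          ∑ i ∈ Finset.range (s - j + 1), ((p : ℝ) ^ (j + i)) • newtonT (Λ (j + i)) := by
        refine (newtonT_frob _ _).trans ?_
        have h1 : ((p ^ j : ℕ) : ℝ) = (p : ℝ) ^ j := by push_cast; ring
        rw [h1]
        refine (Set.smul_set_mono (newtonT_Wseg p hp.one_lt.le Λ j s)).trans ?_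
        refine (smul_setSum_subset _ _ _).trans ?_
        refine setSum_mono _ _ _ (fun i _ => ?_)
        rw [smul_smul, ← pow_add]
      refine (Set.add_subset_add hVj hfr).trans ?_
      have h2 : (j - 1) + 1 = j := by omega
      rw [h2]
      have h3 : ∑ i ∈ Finset.range (s - j + 1), ((p : ℝ) ^ (j + i)) • newtonT (Λ (j + i))
          = ∑ i ∈ Finset.Ico j (s + 1), ((p : ℝ) ^ i) • newtonT (Λ i) := by
        rw [Finset.sum_Ico_eq_sum_range]
        have h4 : s + 1 - j = s - j + 1 := by omega
        rw [h4]
      rw [h3, Finset.sum_range_add_sum_Ico _ (by omega : j ≤ s + 1)]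
end

section
/- Let r = 1, Δ = {0,1} ⊂ ℤ, and N = [-(p-1)/2, 3(p-1)/2] ⊂ ℝ. Then for every l, the tuple (N, N, ..., N) (l+1 copies) is Δ-admissible, i.e., for all 0 ≤ i ≤ j < l, (Δ + N + pN + ... + p^(j-i)N) ∩ p^(j-i+1)ℤ ⊂ p^(j-i+1)Δ. -/
open Pointwise

lemma sum_smul_Icc_subset (c a b : ℝ) (hc : 0 < c) : ∀ n : ℕ,
    (∑ k ∈ Finset.range n, (c ^ k) • Set.Icc a b) ⊆
      Set.Icc ((∑ k ∈ Finset.range n, c ^ k) * a) ((∑ k ∈ Finset.range n, c ^ k) * b) := by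
  intro n
  induction n with
  | zero => simp
  | succ n ih =>
      rw [Finset.sum_range_succ, Finset.sum_range_succ (fun k => c ^ k)]
      calc (∑ k ∈ Finset.range n, (c ^ k) • Set.Icc a b) + (c ^ n) • Set.Icc a b
          ⊆ Set.Icc ((∑ k ∈ Finset.range n, c ^ k) * a) ((∑ k ∈ Finset.range n, c ^ k) * b)
            + Set.Icc (c ^ n * a) (c ^ n * b) := by
            refine Set.add_subset_add ih ?_
            rw [LinearOrderedField.smul_Icc (pow_pos hc n)]
        _ ⊆ _ := by
            have := Set.Icc_add_Icc_subset ((∑ k ∈ Finset.range n, c ^ k) * a)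
              ((∑ k ∈ Finset.range n, c ^ k) * b) (c ^ n * a) (c ^ n * b)
            refine this.trans ?_
            rw [add_mul, add_mul]

/-- let `p` be an odd prime, `Δ = {0,1} ⊂ ℤ` and
`N = [-(p-1)/2, 3(p-1)/2] ⊂ ℝ`.  Then the constant tuple `(N, N, …, N)` is
`Δ`-admissible: for all `0 ≤ i ≤ j < l`,
`(Δ + N + pN + ⋯ + p^{j-i}N) ∩ p^{j-i+1}ℤ ⊆ p^{j-i+1}Δ`
(Minkowski sums and dilations of subsets of `ℝ`). -/
theorem interval_tuple_admissible (p : ℕ) (hp : p.Prime) (hodd : Odd p) (l : ℕ) :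
    ∀ i j : ℕ, i ≤ j → j < l →
      ((({0, 1} : Set ℝ) +
          ∑ k ∈ Finset.range (j - i + 1),
            ((p : ℝ) ^ k) • Set.Icc (-(((p : ℝ) - 1) / 2)) (3 * ((p : ℝ) - 1) / 2)) ∩
        (((p : ℝ) ^ (j - i + 1)) • (Set.range (Int.cast : ℤ → ℝ)))) ⊆
      ((p : ℝ) ^ (j - i + 1)) • ({0, 1} : Set ℝ) := by
  intro i j hij hjl
  set m := j - i + 1 with hm
  have hp2 : (2 : ℝ) ≤ (p : ℝ) := by exact_mod_cast hp.two_le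
  have hp0 : (0 : ℝ) < (p : ℝ) := by linarith
  -- geometric sum formula
  have hS : (∑ k ∈ Finset.range m, (p : ℝ) ^ k) * ((p : ℝ) - 1) = (p : ℝ) ^ m - 1 := by
    rw [mul_comm, mul_comm, geom_sum_mul]
  have hpm1 : (1 : ℝ) ≤ (p : ℝ) ^ m := one_le_pow₀ (by linarith)
  have hpm2 : (2 : ℝ) ≤ (p : ℝ) ^ m := by
    calc (2:ℝ) ≤ (p:ℝ) := hp2
      _ = (p:ℝ) ^ 1 := (pow_one _).symm
      _ ≤ (p:ℝ) ^ m := pow_le_pow_right₀ (by linarith) (by omega)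
  rintro x ⟨hx1, hx2⟩
  obtain ⟨y, hy, z, hz, rfl⟩ := hx1
  obtain ⟨_, ⟨t, rfl⟩, ht⟩ := hx2
  have hz' := sum_smul_Icc_subset (p : ℝ) (-(((p : ℝ) - 1) / 2)) (3 * ((p : ℝ) - 1) / 2) hp0 m hz
  obtain ⟨hz1, hz2⟩ := hz'
  have hzl : -(((p:ℝ)^m - 1) / 2) ≤ z := by
    have : (∑ k ∈ Finset.range m, (p : ℝ) ^ k) * (-(((p : ℝ) - 1) / 2))
        = -(((p:ℝ)^m - 1) / 2) := by
      rw [show (∑ k ∈ Finset.range m, (p : ℝ) ^ k) * (-(((p : ℝ) - 1) / 2))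
        = -((∑ k ∈ Finset.range m, (p : ℝ) ^ k) * ((p : ℝ) - 1) / 2) by ring, hS]
    linarith [this ▸ hz1]
  have hzu : z ≤ 3 * ((p:ℝ)^m - 1) / 2 := by
    have : (∑ k ∈ Finset.range m, (p : ℝ) ^ k) * (3 * ((p : ℝ) - 1) / 2)
        = 3 * ((p:ℝ)^m - 1) / 2 := by
      rw [show (∑ k ∈ Finset.range m, (p : ℝ) ^ k) * (3 * ((p : ℝ) - 1) / 2)
        = 3 * ((∑ k ∈ Finset.range m, (p : ℝ) ^ k) * ((p : ℝ) - 1)) / 2 by ring, hS]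
    linarith [this ▸ hz2]
  have hy' : y = 0 ∨ y = 1 := hy
  have hyb : 0 ≤ y ∧ y ≤ 1 := by rcases hy' with h | h <;> simp [h]
  -- y + z = p^m * t
  have hkey : (p:ℝ)^m * (t:ℝ) = y + z := by
    have := ht
    simp only [smul_eq_mul] at this
    linarith [this]
  have hlb : -(((p:ℝ)^m - 1) / 2) ≤ (p:ℝ)^m * t := by linarith [hyb.1, hyb.2]
  have hub : (p:ℝ)^m * t ≤ 3 * ((p:ℝ)^m - 1) / 2 + 1 := by linarith [hyb.1, hyb.2]
  have hpm0 : (0:ℝ) < (p:ℝ)^m := pow_pos hp0 m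
  have ht0 : (0:ℤ) ≤ t := by
    by_contra h
    push_neg at h
    have : (t:ℝ) ≤ -1 := by exact_mod_cast Int.le_sub_one_of_lt h
    nlinarith
  have ht1 : t ≤ 1 := by
    by_contra h
    push_neg at h
    have : (2:ℝ) ≤ (t:ℝ) := by exact_mod_cast h
    nlinarith
  interval_cases t
  · exact ⟨0, Or.inl rfl, by simp [← hkey]⟩
  · exact ⟨1, Or.inr rfl, by simp [← hkey]⟩
end

section
/- Let p be an odd prime, g ≥ 1, Δ = {1, 2, ..., g} ⊂ ℤ, and N = [0, gp + (p-1)/2 - g] ⊂ ℝ. Then the infinite tuple (N, N, N, ...) is Δ-admissible: for all i ≤ j, (Δ + N + pN + ... + p^(j-i)N) ∩ p^(j-i+1)ℤ ⊂ p^(j-i+1)Δ. -/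
open Pointwise

lemma sum_smul_Icc_eq (p : ℝ) (M : ℝ) (hp : 0 < p) (hM : 0 ≤ M) :
    ∀ n : ℕ, ∑ k ∈ Finset.range n, (p ^ k) • Set.Icc (0 : ℝ) M =
      Set.Icc (0 : ℝ) ((∑ k ∈ Finset.range n, p ^ k) * M) := by
  intro n
  induction n with
  | zero => simp [Set.Icc_self, Set.singleton_zero]
  | succ n ih =>
      have hpow : (0:ℝ) < p ^ n := by positivity
      have hS : (0:ℝ) ≤ ∑ k ∈ Finset.range n, p ^ k :=
        Finset.sum_nonneg fun k _ => by positivity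
      rw [Finset.sum_range_succ, ih, Finset.sum_range_succ,
        LinearOrderedField.smul_Icc hpow, mul_zero,
        Set.Icc_add_Icc (mul_nonneg hS hM) (mul_nonneg hpow.le hM)]
      rw [zero_add, add_mul]

/-- let `p` be an odd prime, `g ≥ 1`, `Δ = {1,…,g} ⊂ ℤ` and
`N = [0, gp + (p-1)/2 - g] ⊂ ℝ`.  Then the infinite constant tuple `(N, N, N, …)` is
`Δ`-admissible: for all `i ≤ j`,
`(Δ + N + pN + ⋯ + p^{j-i}N) ∩ p^{j-i+1}ℤ ⊆ p^{j-i+1}Δ`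
(Minkowski sums and dilations of subsets of `ℝ`). -/
theorem interval_tuple_admissible_KZ (p g : ℕ) (hp : p.Prime) (hodd : Odd p)
    (hg : 1 ≤ g) :
    ∀ i j : ℕ, i ≤ j →
      (((Int.cast '' ↑(Finset.Icc (1 : ℤ) g) : Set ℝ) +
          ∑ k ∈ Finset.range (j - i + 1),
            ((p : ℝ) ^ k) •
              Set.Icc (0 : ℝ) ((g : ℝ) * p + ((p : ℝ) - 1) / 2 - g)) ∩
        (((p : ℝ) ^ (j - i + 1)) • (Set.range (Int.cast : ℤ → ℝ)))) ⊆
      ((p : ℝ) ^ (j - i + 1)) • (Int.cast '' ↑(Finset.Icc (1 : ℤ) g) : Set ℝ) := by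
  intro i j hij
  set n : ℕ := j - i + 1 with hn
  set M : ℝ := (g : ℝ) * p + ((p : ℝ) - 1) / 2 - g with hMdef
  have hp3 : 3 ≤ p := by
    have h2 := hp.two_le
    have : p ≠ 2 := by rintro rfl; exact (by norm_num : ¬ Odd 2) hodd
    omega
  have hpR : (1 : ℝ) < (p : ℝ) := by exact_mod_cast (by omega : 1 < p)
  have hp0 : (0 : ℝ) < (p : ℝ) := by linarith
  have hg1 : (1 : ℝ) ≤ (g : ℝ) := by exact_mod_cast hg
  have hM0 : 0 ≤ M := by
    rw [hMdef]
    nlinarith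
  have hP0 : (0 : ℝ) < (p : ℝ) ^ n := by positivity
  rintro x ⟨hx1, hx2⟩
  obtain ⟨a, ha, s, hs, hax⟩ := Set.mem_add.mp hx1
  obtain ⟨d, hd, rfl⟩ := ha
  obtain ⟨y, ⟨m, rfl⟩, hy⟩ := hx2
  rw [sum_smul_Icc_eq (p : ℝ) M hp0 hM0 n] at hs
  obtain ⟨hs0, hsM⟩ := hs
  rw [Finset.mem_coe, Finset.mem_Icc] at hd
  have hd1 : (1 : ℝ) ≤ (d : ℝ) := by exact_mod_cast hd.1
  have hdg : (d : ℝ) ≤ (g : ℝ) := by exact_mod_cast hd.2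
  have hyx : (p : ℝ) ^ n * (m : ℝ) = x := by simpa [smul_eq_mul] using hy
  have hxval : x = (d : ℝ) + s := hax.symm
  -- geometric sum computation
  have hne : ((p : ℝ) - 1) ≠ 0 := by linarith
  have hS : ∑ k ∈ Finset.range n, (p : ℝ) ^ k = ((p : ℝ) ^ n - 1) / ((p : ℝ) - 1) :=
    geom_sum_eq (by linarith) n
  have hSM : (∑ k ∈ Finset.range n, (p : ℝ) ^ k) * M
      = ((g : ℝ) + 1 / 2) * ((p : ℝ) ^ n - 1) := by
    rw [hS, hMdef]
    field_simp
    ring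
  -- bounds on m
  have hm1 : (1 : ℤ) ≤ m := by
    have hxpos : (0 : ℝ) < x := by rw [hxval]; linarith
    have hmpos : (0 : ℝ) < (m : ℝ) := by
      by_contra hc
      push_neg at hc
      nlinarith
    exact_mod_cast (by exact_mod_cast hmpos : (0 : ℤ) < m)
  have hmg : m ≤ (g : ℤ) := by
    have hxk : x ≤ (g : ℝ) + ((g : ℝ) + 1 / 2) * ((p : ℝ) ^ n - 1) := by
      rw [hxval]; rw [hSM] at hsM; linarith
    have hlt : (p : ℝ) ^ n * (m : ℝ) < ((g : ℝ) + 1) * (p : ℝ) ^ n := by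
      rw [hyx]
      nlinarith
    have hmlt : (m : ℝ) < (g : ℝ) + 1 := by
      nlinarith
    have : (m : ℝ) < ((g : ℤ) : ℝ) + 1 := by push_cast; push_cast at hmlt; linarith
    have := (by exact_mod_cast this : m < (g : ℤ) + 1)
    omega
  exact ⟨(m : ℝ), ⟨m, by simp [Finset.mem_Icc, hm1, hmg], rfl⟩, hy⟩
end

section
/- Let F(z) be a nonzero polynomial in n variables over 𝔽_p of total degree at most d, and let m satisfy p^m > d. Then F is nonzero at at least ((p^(mn)-1)/(p^m-1))·(p^m - 1 - d) + 1 points of (𝔽_{p^m})^n. -/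
open MvPolynomial Finset

private lemma arith_aux (T q d ℓ : ℕ) (hld : ℓ ≤ d) (hdq : d < q) :
    (q * T + 1) * (q - 1 - d) + 1 ≤ (T * (q - 1 - (d - ℓ)) + 1) * (q - ℓ) := by
  have h1 : 1 ≤ q := lt_of_le_of_lt (Nat.zero_le d) hdq
  have h2 : d ≤ q - 1 := by omega
  have h3 : d - ℓ ≤ q - 1 := by omega
  have h4 : ℓ ≤ q := by omega
  zify [h1, h2, h3, h4, hld, show (1:ℕ) ≤ q from h1]
  have hT : (0:ℤ) ≤ T := Int.natCast_nonneg T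
  have hl : (0:ℤ) ≤ ℓ := Int.natCast_nonneg ℓ
  have hld' : (ℓ:ℤ) ≤ d := by exact_mod_cast hld
  have hdq' : (d:ℤ) < q := by exact_mod_cast hdq
  nlinarith [mul_nonneg (mul_nonneg hT hl) (sub_nonneg.mpr hld'),
    mul_nonneg hT hl]

private lemma count_aux {K : Type*} [Field K] [Fintype K] [DecidableEq K] :
    ∀ (n : ℕ) (F : MvPolynomial (Fin n) K) (d : ℕ), F ≠ 0 → F.totalDegree ≤ d →
      d < Fintype.card K →
    (∑ k ∈ Finset.range n, (Fintype.card K) ^ k) * (Fintype.card K - 1 - d) + 1 ≤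
      (Finset.univ.filter fun a : Fin n → K => MvPolynomial.eval a F ≠ 0).card := by
  intro n
  induction n with
  | zero =>
    intro F d hF hdeg hdq
    simp only [Finset.range_zero, Finset.sum_empty, zero_mul, zero_add]
    obtain ⟨c, rfl⟩ := MvPolynomial.C_surjective (Fin 0) F
    have hc : c ≠ 0 := fun h => hF (by rw [h, map_zero])
    exact Finset.card_pos.mpr ⟨default, by simp [hc]⟩
  | succ n ih =>
    intro F d hF hdeg hdq
    set q := Fintype.card K with hq
    set G := MvPolynomial.finSuccEquiv K n F with hGdef
    have hG : G ≠ 0 := fun h => hF ((MvPolynomial.finSuccEquiv K n).injective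
      (by rw [← hGdef, h, map_zero]))
    set ℓ := G.natDegree with hℓdef
    set g := G.coeff ℓ with hgdef
    have hg : g ≠ 0 := Polynomial.leadingCoeff_ne_zero.mpr hG
    have hℓd : ℓ ≤ d := by
      have := MvPolynomial.natDegree_finSuccEquiv F
      rw [← hGdef] at this
      calc ℓ = F.degreeOf 0 := this
        _ ≤ F.totalDegree := MvPolynomial.degreeOf_le_totalDegree F 0
        _ ≤ d := hdeg
    have hgdeg : g.totalDegree ≤ d - ℓ := by
      have := MvPolynomial.totalDegree_coeff_finSuccEquiv_add_le F ℓ (by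
        rw [← hGdef, ← hgdef]; exact hg)
      rw [← hGdef, ← hgdef] at this
      omega
    have hIH := ih g (d - ℓ) hg hgdeg (lt_of_le_of_lt (Nat.sub_le d ℓ) hdq)
    set A := (Finset.univ.filter fun a : Fin n → K => MvPolynomial.eval a g ≠ 0) with hA
    -- For each a with eval a g ≠ 0, there are ≥ q - ℓ values t with eval (cons t a) F ≠ 0
    have key : ∀ a ∈ A, q - ℓ ≤
        (Finset.univ.filter fun t : K => MvPolynomial.eval (Fin.cons t a) F ≠ 0).card := by
      intro a ha
      rw [hA, Finset.mem_filter] at ha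
      set P : Polynomial K := Polynomial.map (MvPolynomial.eval a) G with hP
      have hPcoeff : P.coeff ℓ ≠ 0 := by
        rw [hP, Polynomial.coeff_map]; exact ha.2
      have hPne : P ≠ 0 := fun h => hPcoeff (by rw [h, Polynomial.coeff_zero])
      have hPdeg : P.natDegree ≤ ℓ := by
        rw [hP, hℓdef]; exact Polynomial.natDegree_map_le
      have heval : ∀ t : K, MvPolynomial.eval (Fin.cons t a) F = Polynomial.eval t P := by
        intro t
        rw [hP, hGdef]
        exact MvPolynomial.eval_eq_eval_mv_eval' a t F
      have hzero : (Finset.univ.filter fun t : K => MvPolynomial.eval (Fin.cons t a) F = 0).card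
          ≤ ℓ := by
        have hsub : (Finset.univ.filter fun t : K =>
            MvPolynomial.eval (Fin.cons t a) F = 0) ⊆ P.roots.toFinset := by
          intro t ht
          rw [Finset.mem_filter] at ht
          rw [Multiset.mem_toFinset, Polynomial.mem_roots hPne, Polynomial.IsRoot,
            ← heval t]
          exact ht.2
        calc _ ≤ P.roots.toFinset.card := Finset.card_le_card hsub
          _ ≤ Multiset.card P.roots := Multiset.toFinset_card_le _
          _ ≤ P.natDegree := Polynomial.card_roots' P
          _ ≤ ℓ := hPdeg
      have := Finset.card_filter_add_card_filter_not
        (s := (Finset.univ : Finset K))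
        (p := fun t : K => MvPolynomial.eval (Fin.cons t a) F = 0)
      simp only [Finset.card_univ, ← hq] at this
      simp only [ne_eq]
      omega
    -- fiberwise counting
    have hfiber : ∀ a : Fin n → K,
        ((Finset.univ.filter fun b : Fin (n+1) → K => MvPolynomial.eval b F ≠ 0).filter
          (fun b => Fin.tail b = a)).card
        = (Finset.univ.filter fun t : K => MvPolynomial.eval (Fin.cons t a) F ≠ 0).card := by
      intro a
      refine Finset.card_bij' (fun b _ => b 0) (fun t _ => Fin.cons t a)
        ?_hi ?_hj ?_li ?_ri
      case _hi =>
        intro b hb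
        simp only [Finset.mem_filter, Finset.mem_univ, true_and] at hb ⊢
        rw [show Fin.cons (b 0) a = b by rw [← hb.2]; exact Fin.cons_self_tail b]
        exact hb.1
      case _hj =>
        intro t ht
        simp only [Finset.mem_filter, Finset.mem_univ, true_and] at ht ⊢
        exact ⟨ht, by simp⟩
      case _li =>
        intro b hb
        simp only [Finset.mem_filter] at hb
        show Fin.cons (b 0) a = b
        rw [← hb.2]; exact Fin.cons_self_tail b
      case _ri =>
        intro t _
        beta_reduce
        exact Fin.cons_zero (α := fun _ => K) t a
    have hcount : (Finset.univ.filter fun b : Fin (n+1) → K =>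
        MvPolynomial.eval b F ≠ 0).card
        = ∑ a : Fin n → K,
          (Finset.univ.filter fun t : K => MvPolynomial.eval (Fin.cons t a) F ≠ 0).card := by
      rw [Finset.card_eq_sum_card_fiberwise
        (f := fun b : Fin (n+1) → K => Fin.tail b) (t := Finset.univ)
        (fun x _ => Finset.mem_univ _)]
      exact Finset.sum_congr rfl (fun a _ => hfiber a)
    rw [hcount]
    calc (∑ k ∈ Finset.range (n+1), q ^ k) * (q - 1 - d) + 1
        = (q * (∑ k ∈ Finset.range n, q ^ k) + 1) * (q - 1 - d) + 1 := by
          rw [geom_sum_succ]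
      _ ≤ ((∑ k ∈ Finset.range n, q ^ k) * (q - 1 - (d - ℓ)) + 1) * (q - ℓ) :=
          arith_aux _ _ _ _ hℓd hdq
      _ ≤ A.card * (q - ℓ) := Nat.mul_le_mul_right _ hIH
      _ = ∑ _a ∈ A, (q - ℓ) := by rw [Finset.sum_const, smul_eq_mul]
      _ ≤ ∑ a ∈ A, (Finset.univ.filter fun t : K =>
            MvPolynomial.eval (Fin.cons t a) F ≠ 0).card := Finset.sum_le_sum key
      _ ≤ ∑ a : Fin n → K, (Finset.univ.filter fun t : K =>
            MvPolynomial.eval (Fin.cons t a) F ≠ 0).card :=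
          Finset.sum_le_sum_of_subset (Finset.filter_subset _ _)

/-- let `F ∈ 𝔽_p[z_1,…,z_n]` be nonzero of total degree at most `d`, and
let `p^m > d`.  Then `F` is nonzero at at least `((p^{mn}-1)/(p^m-1))·(p^m-1-d) + 1`
points of `(𝔽_{p^m})^n` (the quotient `(p^{mn}-1)/(p^m-1)` being the geometric sum
`1 + p^m + ⋯ + p^{m(n-1)}`). -/
theorem count_nonvanishing_points (p m n d : ℕ) (hp : p.Prime) [Fact p.Prime]
    (hpm : d < p ^ m)
    (F : MvPolynomial (Fin n) (ZMod p)) (hF : F ≠ 0) (hd : F.totalDegree ≤ d) :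
    (∑ k ∈ Finset.range n, (p ^ m) ^ k) * (p ^ m - 1 - d) + 1 ≤
      {a : Fin n → GaloisField p m |
        MvPolynomial.eval a
          (MvPolynomial.map (algebraMap (ZMod p) (GaloisField p m)) F) ≠ 0}.ncard := by
  classical
  haveI : Fintype (GaloisField p m) := Fintype.ofFinite _
  set K := GaloisField p m with hK
  set F' : MvPolynomial (Fin n) K := MvPolynomial.map (algebraMap (ZMod p) K) F with hF'
  have hinj : Function.Injective (algebraMap (ZMod p) K) := (algebraMap (ZMod p) K).injective
  have hF'ne : F' ≠ 0 := fun h => hF (MvPolynomial.map_injective _ hinj (by simpa using h))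
  have hF'deg : F'.totalDegree ≤ d := by
    refine le_trans ?_ hd
    rw [MvPolynomial.totalDegree, MvPolynomial.totalDegree]
    exact Finset.sup_mono (MvPolynomial.support_map_subset _ _)
  have hset : {a : Fin n → K | MvPolynomial.eval a F' ≠ 0}.ncard
      = (Finset.univ.filter fun a : Fin n → K => MvPolynomial.eval a F' ≠ 0).card := by
    rw [show {a : Fin n → K | MvPolynomial.eval a F' ≠ 0}
        = ↑(Finset.univ.filter fun a : Fin n → K => MvPolynomial.eval a F' ≠ 0) by
      ext a; simp]
    exact Set.ncard_coe_finset _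
  rw [hset]
  rcases Nat.eq_zero_or_pos m with hm | hm
  · -- m = 0 : then d = 0, p^m = 1, LHS = n*0+1 = 1
    subst hm
    simp only [pow_zero] at hpm ⊢
    interval_cases d
    have h0 : (0:ℕ) < Fintype.card K := Fintype.card_pos
    have hle := count_aux n F' 0 hF'ne hF'deg h0
    simp only [one_pow, Finset.sum_const, Finset.card_range, smul_eq_mul, mul_one]
    omega
  · have hcard : Fintype.card K = p ^ m := by
      rw [← Nat.card_eq_fintype_card]
      exact GaloisField.card p m hm.ne'
    have := count_aux n F' d hF'ne hF'deg (by rw [hcard]; exact hpm)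
    rwa [hcard] at this
end

section
/- Let n = 2g+1, Φ_s(t,z) = ((t-z_1)···(t-z_n))^((p^s-1)/2), and let Ω_{ij} be the n×n matrix with entries -1 at positions (i,i),(j,j), +1 at (i,j),(j,i), and 0 elsewhere. For each i, the column vector identity (∂/∂z_i + ((p^s-1)/2)·Σ_{j≠i} Ω_{ij}/(z_i - z_j)) applied to the vector (Φ_s(t,z)/(t-z_1), ..., Φ_s(t,z)/(t-z_n)) equals ∂Ψ_s^i/∂t, where Ψ_s^i is the vector with -Φ_s(t,z)/(t-z_i) in position i and 0 elsewhere. -/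
open Polynomial

/-- The master polynomial `Φ_s(t,z) = ((t-z_1)⋯(t-z_n))^((p^s-1)/2)`, as a polynomial
in `t` with coefficients in `ℤ[z_1,…,z_n]`. -/
noncomputable def masterPoly (p s n : ℕ) : Polynomial (MvPolynomial (Fin n) ℤ) :=
  (∏ i : Fin n, (X - C (MvPolynomial.X i))) ^ ((p ^ s - 1) / 2)

/-- `Φ_s(t,z)/(t - z_i) = (t-z_i)^((p^s-1)/2 - 1) · ∏_{j≠i} (t-z_j)^((p^s-1)/2)`. -/
noncomputable def masterQuot (p s n : ℕ) (i : Fin n) :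
    Polynomial (MvPolynomial (Fin n) ℤ) :=
  (X - C (MvPolynomial.X i)) ^ ((p ^ s - 1) / 2 - 1) *
    ∏ j ∈ Finset.univ.erase i, (X - C (MvPolynomial.X j)) ^ ((p ^ s - 1) / 2)

/-- The formal derivative `∂/∂z_i`, applied coefficientwise to a polynomial in `t`
with coefficients in `ℤ[z_1,…,z_n]`. -/
noncomputable def dz {n : ℕ} (i : Fin n) (f : Polynomial (MvPolynomial (Fin n) ℤ)) :
    Polynomial (MvPolynomial (Fin n) ℤ) :=
  f.sum fun k a => C (MvPolynomial.pderiv i a) * X ^ k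

/-- The matrix `Ω_{ij}`: `-1` at positions `(i,i)`, `(j,j)`, `+1` at `(i,j)`, `(j,i)`,
`0` elsewhere. -/
def Om (R : Type*) [CommRing R] {n : ℕ} (i j : Fin n) : Matrix (Fin n) (Fin n) R :=
  fun k l =>
    if (k = i ∧ l = i) ∨ (k = j ∧ l = j) then -1
    else if (k = i ∧ l = j) ∨ (k = j ∧ l = i) then 1 else 0



section KZAux

private lemma dz_coeff {n : ℕ} (i : Fin n) (f : Polynomial (MvPolynomial (Fin n) ℤ)) (m : ℕ) :
    (dz i f).coeff m = MvPolynomial.pderiv i (f.coeff m) := by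
  rw [dz, Polynomial.coeff_sum]
  unfold Polynomial.sum
  simp only [coeff_C_mul, coeff_X_pow, mul_ite, mul_one, mul_zero]
  rw [Finset.sum_ite_eq f.support m (fun k => MvPolynomial.pderiv i (f.coeff k))]
  by_cases h : m ∈ f.support
  · simp [h]
  · simp [h, Polynomial.notMem_support_iff.mp h]

private lemma dz_mul {n : ℕ} (i : Fin n) (f g : Polynomial (MvPolynomial (Fin n) ℤ)) :
    dz i (f * g) = dz i f * g + f * dz i g := by
  refine Polynomial.ext fun m => ?_
  rw [coeff_add, coeff_mul, coeff_mul, dz_coeff, coeff_mul]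
  rw [show ((MvPolynomial.pderiv i) (∑ x ∈ Finset.HasAntidiagonal.antidiagonal m, f.coeff x.1 * g.coeff x.2))
      = ∑ x ∈ Finset.HasAntidiagonal.antidiagonal m, (MvPolynomial.pderiv i) (f.coeff x.1 * g.coeff x.2) from
    map_sum ((MvPolynomial.pderiv i).toLinearMap :
      MvPolynomial (Fin n) ℤ →ₗ[ℤ] MvPolynomial (Fin n) ℤ) _ _]
  rw [← Finset.sum_add_distrib]
  refine Finset.sum_congr rfl fun x _ => ?_
  rw [dz_coeff, dz_coeff, MvPolynomial.pderiv_mul]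

private lemma dz_one {n : ℕ} (i : Fin n) : dz i (1 : Polynomial (MvPolynomial (Fin n) ℤ)) = 0 := by
  ext m
  simp only [dz_coeff, coeff_one, coeff_zero, apply_ite (MvPolynomial.pderiv i),
    MvPolynomial.pderiv_one, map_zero, ite_self]

private lemma dz_Y_self {n : ℕ} (i : Fin n) :
    dz i ((X : Polynomial (MvPolynomial (Fin n) ℤ)) - C (MvPolynomial.X i)) = -1 := by
  ext m
  simp only [dz_coeff, coeff_sub, map_sub, coeff_X, coeff_C,
    apply_ite (MvPolynomial.pderiv i), MvPolynomial.pderiv_one, map_zero, map_one,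
    MvPolynomial.pderiv_X_self, coeff_neg, coeff_one]
  split_ifs <;> simp

private lemma dz_Y_ne {n : ℕ} {i j : Fin n} (h : j ≠ i) :
    dz i ((X : Polynomial (MvPolynomial (Fin n) ℤ)) - C (MvPolynomial.X j)) = 0 := by
  ext m
  simp only [dz_coeff, coeff_sub, map_sub, coeff_X, coeff_C,
    apply_ite (MvPolynomial.pderiv i), MvPolynomial.pderiv_one, map_zero, map_one,
    MvPolynomial.pderiv_X_of_ne h, coeff_zero]
  split_ifs <;> simp

private lemma leibniz_finset_prod {R : Type*} [CommRing R] (D : R → R)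
    (hmul : ∀ a b, D (a * b) = D a * b + a * D b)
    (hone : D 1 = 0) {ι : Type*} [DecidableEq ι] (s : Finset ι) (f : ι → R) :
    D (∏ j ∈ s, f j) = ∑ j ∈ s, (∏ l ∈ s.erase j, f l) * D (f j) := by
  induction s using Finset.induction_on with
  | empty =>
    show D 1 = _
    rw [hone, Finset.sum_empty]
  | @insert a t ha ih =>
    rw [Finset.prod_insert ha]
    rw [hmul]
    rw [ih]
    rw [Finset.sum_insert ha]
    rw [Finset.erase_insert ha]
    rw [Finset.mul_sum]
    have h2 : ∑ j ∈ t, f a * ((∏ l ∈ t.erase j, f l) * D (f j))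
        = ∑ j ∈ t, (∏ l ∈ (insert a t).erase j, f l) * D (f j) := by
      refine Finset.sum_congr rfl fun j hj => ?_
      have hja : j ≠ a := fun h => ha (h ▸ hj)
      rw [Finset.erase_insert_of_ne hja.symm,
        Finset.prod_insert (fun h => ha (Finset.mem_of_mem_erase h)), ← mul_assoc]
    rw [h2, mul_comm (D (f a))]

private lemma derivative_finset_prod {R : Type*} [CommRing R] {ι : Type*} [DecidableEq ι]
    (s : Finset ι) (f : ι → Polynomial R) :
    Polynomial.derivative (∏ j ∈ s, f j)
      = ∑ j ∈ s, (∏ l ∈ s.erase j, f l) * Polynomial.derivative (f j) := by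
  induction s using Finset.induction_on with
  | empty => rw [Finset.prod_empty, Polynomial.derivative_one, Finset.sum_empty]
  | @insert a t ha ih =>
    rw [Finset.prod_insert ha, Polynomial.derivative_mul, ih, Finset.sum_insert ha,
      Finset.erase_insert ha]
    rw [Finset.mul_sum]
    have h2 : ∑ j ∈ t, f a * ((∏ l ∈ t.erase j, f l) * Polynomial.derivative (f j))
        = ∑ j ∈ t, (∏ l ∈ (insert a t).erase j, f l) * Polynomial.derivative (f j) := by
      refine Finset.sum_congr rfl fun j hj => ?_
      have hja : j ≠ a := fun h => ha (h ▸ hj)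
      rw [Finset.erase_insert_of_ne hja.symm,
        Finset.prod_insert (fun h => ha (Finset.mem_of_mem_erase h)), ← mul_assoc]
    rw [h2, mul_comm (Polynomial.derivative (f a))]

private lemma derivative_Y {n : ℕ} (j : Fin n) :
    Polynomial.derivative ((X : Polynomial (MvPolynomial (Fin n) ℤ)) - C (MvPolynomial.X j))
      = 1 := by
  simp

private lemma dz_Y_pow_self {n : ℕ} (i : Fin n) (m : ℕ) :
    dz i (((X : Polynomial (MvPolynomial (Fin n) ℤ)) - C (MvPolynomial.X i)) ^ m)
      = - Polynomial.derivative (((X : Polynomial (MvPolynomial (Fin n) ℤ))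
          - C (MvPolynomial.X i)) ^ m) := by
  induction m with
  | zero => rw [pow_zero, dz_one, derivative_one, neg_zero]
  | succ m ih =>
    rw [pow_succ, dz_mul, ih, dz_Y_self, derivative_mul, derivative_Y]
    ring

private lemma dz_Y_pow_ne {n : ℕ} {i j : Fin n} (h : j ≠ i) (m : ℕ) :
    dz i (((X : Polynomial (MvPolynomial (Fin n) ℤ)) - C (MvPolynomial.X j)) ^ m) = 0 := by
  induction m with
  | zero => rw [pow_zero, dz_one]
  | succ m ih => rw [pow_succ, dz_mul, ih, dz_Y_ne h, zero_mul, mul_zero, add_zero]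

private lemma dz_prod_ne {n : ℕ} (i : Fin n) (t : Finset (Fin n)) (hi : i ∉ t) (e : ℕ) :
    dz i (∏ j ∈ t, ((X : Polynomial (MvPolynomial (Fin n) ℤ)) - C (MvPolynomial.X j)) ^ e)
      = 0 := by
  rw [leibniz_finset_prod (dz i) (dz_mul i) (dz_one i)]
  refine Finset.sum_eq_zero fun j hj => ?_
  have : j ≠ i := fun h => hi (h ▸ hj)
  rw [dz_Y_pow_ne this, mul_zero]

private lemma om_mulVec {R : Type*} [CommRing R] {n : ℕ} {i j : Fin n} (hij : j ≠ i)
    (v : Fin n → R) (k : Fin n) :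
    (Om R i j).mulVec v k =
      if k = i then v j - v i else if k = j then v i - v j else 0 := by
  have key : ∀ l, Om R i j k l * v l =
      (if l = i then (if k = i then -(v i) else if k = j then v i else 0) else 0) +
      (if l = j then (if k = i then v j else if k = j then -(v j) else 0) else 0) := by
    intro l
    by_cases hli : l = i <;> by_cases hlj : l = j <;>
      by_cases hki : k = i <;> by_cases hkj : k = j <;>
      simp_all [Om]
  show ∑ l, Om R i j k l * v l = _
  rw [Finset.sum_congr rfl fun l _ => key l, Finset.sum_add_distrib,
    Finset.sum_ite_eq' Finset.univ i, Finset.sum_ite_eq' Finset.univ j]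
  simp only [Finset.mem_univ, if_true]
  by_cases hki : k = i <;> by_cases hkj : k = j <;> simp_all <;> ring

/-- Abbreviated form of `masterQuot` with the exponent as a parameter. -/
private noncomputable def mq {n : ℕ} (e : ℕ) (m : Fin n) :
    Polynomial (MvPolynomial (Fin n) ℤ) :=
  (X - C (MvPolynomial.X m)) ^ (e - 1) *
    ∏ j ∈ Finset.univ.erase m, (X - C (MvPolynomial.X j)) ^ e

private lemma masterQuot_sub {n : ℕ} (e : ℕ) (he : 1 ≤ e) {i k : Fin n} (hik : k ≠ i) :
    mq e i - mq e k
    = C (MvPolynomial.X i - MvPolynomial.X k) *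
      ((X - C (MvPolynomial.X i)) ^ (e - 1) * (X - C (MvPolynomial.X k)) ^ (e - 1) *
        ∏ l ∈ (Finset.univ.erase i).erase k, (X - C (MvPolynomial.X l)) ^ e) := by
  obtain ⟨m, rfl⟩ : ∃ m, e = m + 1 := ⟨e - 1, (Nat.succ_pred_eq_of_pos he).symm⟩
  have hki : k ∈ Finset.univ.erase i := Finset.mem_erase.mpr ⟨hik, Finset.mem_univ k⟩
  have hik' : i ∈ Finset.univ.erase k :=
    Finset.mem_erase.mpr ⟨fun h => hik h.symm, Finset.mem_univ i⟩
  rw [mq, mq, ← Finset.mul_prod_erase _ _ hki, ← Finset.mul_prod_erase _ _ hik',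
    Finset.erase_right_comm (a := k) (b := i)]
  simp only [Nat.add_sub_cancel]
  have hC : (C (MvPolynomial.X i - MvPolynomial.X k) : Polynomial (MvPolynomial (Fin n) ℤ))
      = (X - C (MvPolynomial.X k)) - (X - C (MvPolynomial.X i)) := by
    rw [map_sub]; ring
  rw [hC, pow_succ, pow_succ]
  ring

private lemma KZ_general {n : ℕ} (e : ℕ) (he : 1 ≤ e) (i k : Fin n) :
    C (∏ j ∈ Finset.univ.erase i, (MvPolynomial.X i - MvPolynomial.X j)) * dz i (mq e k) +
      e • ∑ j ∈ Finset.univ.erase i,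
          C (∏ l ∈ (Finset.univ.erase i).erase j, (MvPolynomial.X i - MvPolynomial.X l)) *
            ((Om (Polynomial (MvPolynomial (Fin n) ℤ)) i j).mulVec (fun m => mq e m) k) =
    C (∏ j ∈ Finset.univ.erase i, (MvPolynomial.X i - MvPolynomial.X j)) *
      Polynomial.derivative (if k = i then -(mq e i) else 0) := by
  classical
  by_cases hk : k = i
  · subst hk
    rw [if_pos rfl]
    have hterm : ∀ j ∈ Finset.univ.erase k,
        C (∏ l ∈ (Finset.univ.erase k).erase j, (MvPolynomial.X k - MvPolynomial.X l)) *
          ((Om (Polynomial (MvPolynomial (Fin n) ℤ)) k j).mulVec (fun m => mq e m) k)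
        = -(C (∏ j ∈ Finset.univ.erase k, (MvPolynomial.X k - MvPolynomial.X j)) *
            ((X - C (MvPolynomial.X k)) ^ (e - 1) * (X - C (MvPolynomial.X j)) ^ (e - 1) *
              ∏ l ∈ (Finset.univ.erase k).erase j, (X - C (MvPolynomial.X l)) ^ e)) := by
      intro j hj
      have hjk : j ≠ k := Finset.ne_of_mem_erase hj
      rw [om_mulVec hjk _ k, if_pos rfl]
      have hd := masterQuot_sub e he hjk
      have h2 : mq e j - mq e k
          = -(C (MvPolynomial.X k - MvPolynomial.X j) *
            ((X - C (MvPolynomial.X k)) ^ (e - 1) * (X - C (MvPolynomial.X j)) ^ (e - 1) *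
              ∏ l ∈ (Finset.univ.erase k).erase j, (X - C (MvPolynomial.X l)) ^ e)) := by
        rw [← hd]; ring
      rw [h2, ← Finset.mul_prod_erase _ _ hj, map_mul]
      ring
    rw [Finset.sum_congr rfl hterm]
    have hdzB : dz k (∏ j ∈ Finset.univ.erase k,
        ((X : Polynomial (MvPolynomial (Fin n) ℤ)) - C (MvPolynomial.X j)) ^ e) = 0 :=
      dz_prod_ne k _ (Finset.notMem_erase k _) e
    have hdz : dz k (mq e k)
        = -(Polynomial.derivative ((X - C (MvPolynomial.X k)) ^ (e - 1))) *
            ∏ j ∈ Finset.univ.erase k,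
              ((X : Polynomial (MvPolynomial (Fin n) ℤ)) - C (MvPolynomial.X j)) ^ e := by
      rw [mq, dz_mul, hdzB, mul_zero, add_zero, dz_Y_pow_self]
    have hderB : Polynomial.derivative (∏ j ∈ Finset.univ.erase k,
          ((X : Polynomial (MvPolynomial (Fin n) ℤ)) - C (MvPolynomial.X j)) ^ e)
        = ∑ j ∈ Finset.univ.erase k,
            (∏ l ∈ (Finset.univ.erase k).erase j,
              ((X : Polynomial (MvPolynomial (Fin n) ℤ)) - C (MvPolynomial.X l)) ^ e) *
              (C ((e : MvPolynomial (Fin n) ℤ)) * (X - C (MvPolynomial.X j)) ^ (e - 1)) := by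
      rw [derivative_finset_prod]
      refine Finset.sum_congr rfl fun j hj => ?_
      rw [Polynomial.derivative_pow, derivative_Y, mul_one]
    have hsums : e • (∑ j ∈ Finset.univ.erase k,
          -(C (∏ j ∈ Finset.univ.erase k, (MvPolynomial.X k - MvPolynomial.X j)) *
            ((X - C (MvPolynomial.X k)) ^ (e - 1) * (X - C (MvPolynomial.X j)) ^ (e - 1) *
              ∏ l ∈ (Finset.univ.erase k).erase j, (X - C (MvPolynomial.X l)) ^ e)))
        = -(C (∏ j ∈ Finset.univ.erase k, (MvPolynomial.X k - MvPolynomial.X j)) *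
            ((X - C (MvPolynomial.X k)) ^ (e - 1) *
              ∑ j ∈ Finset.univ.erase k,
                (∏ l ∈ (Finset.univ.erase k).erase j,
                  ((X : Polynomial (MvPolynomial (Fin n) ℤ)) - C (MvPolynomial.X l)) ^ e) *
                  (C ((e : MvPolynomial (Fin n) ℤ)) * (X - C (MvPolynomial.X j)) ^ (e - 1)))) := by
      rw [Finset.smul_sum, Finset.mul_sum, Finset.mul_sum, ← Finset.sum_neg_distrib]
      refine Finset.sum_congr rfl fun j hj => ?_
      rw [nsmul_eq_mul, Polynomial.C_eq_natCast]
      ring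
    rw [hdz, mq, derivative_neg, derivative_mul, hderB, hsums]
    ring
  · rw [if_neg hk, derivative_zero, mul_zero]
    have hki : k ∈ Finset.univ.erase i := Finset.mem_erase.mpr ⟨hk, Finset.mem_univ k⟩
    have hik' : i ∈ Finset.univ.erase k :=
      Finset.mem_erase.mpr ⟨fun h => hk h.symm, Finset.mem_univ i⟩
    have hterm : ∀ j ∈ Finset.univ.erase i,
        C (∏ l ∈ (Finset.univ.erase i).erase j, (MvPolynomial.X i - MvPolynomial.X l)) *
          ((Om (Polynomial (MvPolynomial (Fin n) ℤ)) i j).mulVec (fun m => mq e m) k)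
        = if k = j then
            C (∏ l ∈ (Finset.univ.erase i).erase j, (MvPolynomial.X i - MvPolynomial.X l)) *
              (mq e i - mq e j)
          else 0 := by
      intro j hj
      rw [om_mulVec (Finset.ne_of_mem_erase hj) _ k, if_neg hk]
      split_ifs with h
      · rfl
      · exact mul_zero _
    rw [Finset.sum_congr rfl hterm, Finset.sum_ite_eq, if_pos hki]
    have hdzYk : dz i (((X : Polynomial (MvPolynomial (Fin n) ℤ))
        - C (MvPolynomial.X k)) ^ (e - 1)) = 0 := dz_Y_pow_ne hk (e - 1)
    have hdzP : dz i (∏ l ∈ (Finset.univ.erase i).erase k,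
        ((X : Polynomial (MvPolynomial (Fin n) ℤ)) - C (MvPolynomial.X l)) ^ e) = 0 :=
      dz_prod_ne i _ (fun h => Finset.notMem_erase i Finset.univ (Finset.mem_of_mem_erase h)) e
    have hdzYi : dz i (((X : Polynomial (MvPolynomial (Fin n) ℤ))
        - C (MvPolynomial.X i)) ^ e)
        = -(C ((e : MvPolynomial (Fin n) ℤ)) * (X - C (MvPolynomial.X i)) ^ (e - 1)) := by
      rw [dz_Y_pow_self, Polynomial.derivative_pow, derivative_Y, mul_one]
    have hmqk : mq e k = (X - C (MvPolynomial.X k)) ^ (e - 1) *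
        ((X - C (MvPolynomial.X i)) ^ e *
          ∏ l ∈ (Finset.univ.erase i).erase k,
            ((X : Polynomial (MvPolynomial (Fin n) ℤ)) - C (MvPolynomial.X l)) ^ e) := by
      rw [mq, ← Finset.mul_prod_erase _ _ hik', Finset.erase_right_comm]
    have hdz : dz i (mq e k) = (X - C (MvPolynomial.X k)) ^ (e - 1) *
        (-(C ((e : MvPolynomial (Fin n) ℤ)) * (X - C (MvPolynomial.X i)) ^ (e - 1)) *
          ∏ l ∈ (Finset.univ.erase i).erase k,
            ((X : Polynomial (MvPolynomial (Fin n) ℤ)) - C (MvPolynomial.X l)) ^ e) := by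
      rw [hmqk, dz_mul, hdzYk, zero_mul, zero_add, dz_mul, hdzP, mul_zero, add_zero, hdzYi]
    have hQ : (C (∏ j ∈ Finset.univ.erase i, (MvPolynomial.X i - MvPolynomial.X j)) :
          Polynomial (MvPolynomial (Fin n) ℤ))
        = C (MvPolynomial.X i - MvPolynomial.X k) *
          C (∏ l ∈ (Finset.univ.erase i).erase k, (MvPolynomial.X i - MvPolynomial.X l)) := by
      rw [← Finset.mul_prod_erase _ _ hki, map_mul]
    rw [hdz, masterQuot_sub e he hk, nsmul_eq_mul, hQ, Polynomial.C_eq_natCast]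
    ring

end KZAux

/-- with `n = 2g+1`, `e = (p^s-1)/2` and
`v = (Φ_s/(t-z_1), …, Φ_s/(t-z_n))`, the vector identity
`(∂/∂z_i + e·Σ_{j≠i} Ω_{ij}/(z_i-z_j)) v = ∂Ψ_s^i/∂t` holds for every `i`, where
`Ψ_s^i` has `-Φ_s/(t-z_i)` in position `i` and `0` elsewhere.  The identity is stated
componentwise after clearing the denominators `z_i - z_j`. -/
theorem master_polynomial_KZ_identity (p s g : ℕ) (hp : p.Prime) (hodd : Odd p)
    (hs : 1 ≤ s) :
    ∀ i k : Fin (2 * g + 1),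
      C (∏ j ∈ Finset.univ.erase i, (MvPolynomial.X i - MvPolynomial.X j)) *
          dz i (masterQuot p s (2 * g + 1) k) +
        ((p ^ s - 1) / 2) •
          ∑ j ∈ Finset.univ.erase i,
            C (∏ l ∈ (Finset.univ.erase i).erase j,
                (MvPolynomial.X i - MvPolynomial.X l)) *
              ((Om (Polynomial (MvPolynomial (Fin (2 * g + 1)) ℤ)) i j).mulVec
                (fun m => masterQuot p s (2 * g + 1) m) k) =
      C (∏ j ∈ Finset.univ.erase i, (MvPolynomial.X i - MvPolynomial.X j)) *
        Polynomial.derivative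
          (if k = i then -(masterQuot p s (2 * g + 1) i) else 0) := by
  have hp3 : 3 ≤ p := by
    have h2 := hp.two_le
    have : p ≠ 2 := by
      intro h
      rw [h] at hodd
      revert hodd
      decide
    omega
  have hps : 3 ≤ p ^ s :=
    le_trans hp3 (Nat.le_self_pow (by omega) p)
  have he : 1 ≤ (p ^ s - 1) / 2 := by
    have : 2 ≤ p ^ s - 1 := by omega
    omega
  intro i k
  exact KZ_general ((p ^ s - 1) / 2) he i k
end

section
/- Let p be an odd prime with p > 2g+1, F(t,z) = ((t-z_1)···(t-z_{2g+1}))^((p-1)/2), Δ = {1,...,g}, and A(1,F) = (Cf_{pv-u}F)_{u,v=1,...,g} the Hasse–Witt matrix, where Cf_k extracts the coefficient of t^k. Then the polynomial det A(1, F(t,z)) ∈ ℤ[z_1,...,z_{2g+1}] is nonzero modulo p. -/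
open Polynomial Finset


lemma poly_coeff_prod {R : Type*} [CommSemiring R] {ι : Type*} [DecidableEq ι]
    (f : ι → R[X]) (d : ℕ) (s : Finset ι) :
    (∏ j ∈ s, f j).coeff d = ∑ l ∈ Finset.finsuppAntidiag s d, ∏ i ∈ s, (f i).coeff (l i) := by
  have h := PowerSeries.coeff_prod (fun j => ((f j : R[X]) : PowerSeries R)) d s
  have hc : (∏ j ∈ s, ((f j : R[X]) : PowerSeries R)) = ((∏ j ∈ s, f j : R[X]) : PowerSeries R) :=
    (map_prod (Polynomial.coeToPowerSeries.ringHom) f s).symm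
  rw [hc] at h
  simpa [Polynomial.coeff_coe] using h

lemma mv_coeff_prod {R : Type*} [CommSemiring R] {σ : Type*} [DecidableEq σ] {ι : Type*} [DecidableEq ι]
    (f : ι → MvPolynomial σ R) (d : σ →₀ ℕ) (s : Finset ι) :
    MvPolynomial.coeff d (∏ j ∈ s, f j) =
      ∑ l ∈ Finset.finsuppAntidiag s d, ∏ i ∈ s, MvPolynomial.coeff (l i) (f i) := by
  have h := MvPowerSeries.coeff_prod (fun j => ((f j : MvPolynomial σ R) : MvPowerSeries σ R)) d s
  have hc : (∏ j ∈ s, ((f j : MvPolynomial σ R) : MvPowerSeries σ R))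
      = ((∏ j ∈ s, f j : MvPolynomial σ R) : MvPowerSeries σ R) :=
    (map_prod (MvPolynomial.coeToMvPowerSeries.ringHom) f s).symm
  rw [hc] at h
  simpa [MvPolynomial.coeff_coe] using h

lemma prod_X_pow_univ {R : Type*} [CommSemiring R] {n : ℕ} (s : Fin n →₀ ℕ) :
    (∏ x : Fin n, (MvPolynomial.X x : MvPolynomial (Fin n) R) ^ s x) = MvPolynomial.monomial s 1 := by
  rw [← MvPolynomial.prod_X_pow_eq_monomial]
  exact (Finset.prod_subset (Finset.subset_univ _) (fun x _ hx => by
    simp [Finsupp.notMem_support_iff.mp hx])).symm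


lemma coeff_master (n h : ℕ) (N : ℕ) (m : Fin n →₀ ℕ) :
    MvPolynomial.coeff m
      ((((∏ i : Fin n, (X - C (MvPolynomial.X i))) ^ h :
          Polynomial (MvPolynomial (Fin n) ℤ))).coeff N)
    = if (∑ i, m i) + N = n * h
      then (-1 : ℤ) ^ (∑ i, m i) * ∏ i, (h.choose (m i) : ℤ) else 0 := by
  rw [← Finset.prod_pow, poly_coeff_prod, MvPolynomial.coeff_sum]
  have hterm : ∀ l : Fin n →₀ ℕ,
      MvPolynomial.coeff m (∏ i : Fin n, (((X : Polynomial (MvPolynomial (Fin n) ℤ)) - C (MvPolynomial.X i)) ^ h).coeff (l i))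
      = if (∀ i, l i + m i = h)
        then (-1 : ℤ) ^ (∑ i, m i) * ∏ i, (h.choose (m i) : ℤ) else 0 := by
    intro l
    have hfac : ∀ i : Fin n, (((X : Polynomial (MvPolynomial (Fin n) ℤ)) - C (MvPolynomial.X i)) ^ h).coeff (l i)
        = MvPolynomial.C ((-1 : ℤ) ^ (h - l i) * (h.choose (l i) : ℤ)) *
            MvPolynomial.X i ^ (h - l i) := by
      intro i
      rw [sub_eq_add_neg, ← map_neg, Polynomial.coeff_X_add_C_pow]
      rw [neg_pow]
      simp only [map_mul, map_pow, map_neg, map_one, map_natCast]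
      ring
    rw [Finset.prod_congr rfl (fun i _ => hfac i), Finset.prod_mul_distrib, ← map_prod]
    set e : Fin n →₀ ℕ := Finsupp.equivFunOnFinite.symm (fun i => h - l i) with he
    have hee : ∀ i, e i = h - l i := fun i => rfl
    have : (∏ i : Fin n, MvPolynomial.X i ^ (h - l i) : MvPolynomial (Fin n) ℤ)
        = MvPolynomial.monomial e 1 := by
      rw [← prod_X_pow_univ e]
      exact Finset.prod_congr rfl (fun i _ => by rw [hee])
    rw [this, MvPolynomial.C_mul_monomial, mul_one, MvPolynomial.coeff_monomial]
    by_cases hcond : ∀ i, l i + m i = h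
    · have hem : e = m := Finsupp.ext (fun i => by have := hcond i; rw [hee]; omega)
      rw [if_pos hem, if_pos hcond]
      have h1 : ∀ i : Fin n, (-1 : ℤ) ^ (h - l i) * (h.choose (l i) : ℤ)
          = (-1 : ℤ) ^ (m i) * (h.choose (m i) : ℤ) := by
        intro i
        have hc := hcond i
        have h2 : h - l i = m i := by omega
        have h3 : l i = h - m i := by omega
        rw [h2, h3, Nat.choose_symm (by omega)]
      rw [Finset.prod_congr rfl (fun i _ => h1 i), Finset.prod_mul_distrib]
      congr 1
      rw [Finset.prod_pow_eq_pow_sum]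
    · rw [if_neg hcond]
      by_cases hem : e = m
      · rw [if_pos hem]
        obtain ⟨i₀, hi₀⟩ := not_forall.mp hcond
        have : h - l i₀ = m i₀ := by rw [← hee, hem]
        have hl : h < l i₀ := by omega
        apply Finset.prod_eq_zero (Finset.mem_univ i₀)
        rw [Nat.choose_eq_zero_of_lt hl]
        simp
      · rw [if_neg hem]
  rw [Finset.sum_congr rfl (fun l _ => hterm l)]
  by_cases hm : ∀ i, m i ≤ h
  · set l₀ : Fin n →₀ ℕ := Finsupp.equivFunOnFinite.symm (fun i => h - m i) with hl₀
    have hl₀e : ∀ i, l₀ i = h - m i := fun i => rfl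
    have hiff : ∀ l : Fin n →₀ ℕ, (∀ i, l i + m i = h) ↔ l = l₀ := by
      intro l
      constructor
      · intro hc
        exact Finsupp.ext (fun i => by have := hc i; rw [hl₀e]; omega)
      · rintro rfl i
        rw [hl₀e]
        have := hm i; omega
    rw [Finset.sum_congr rfl (fun l _ => by rw [if_congr (hiff l) rfl rfl])]
    rw [Finset.sum_ite_eq' (Finset.finsuppAntidiag univ N) l₀]
    have hmem : l₀ ∈ Finset.finsuppAntidiag (univ : Finset (Fin n)) N ↔ (∑ i, m i) + N = n * h := by
      rw [Finset.mem_finsuppAntidiag]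
      have heta : univ.sum ⇑l₀ = ∑ i, l₀ i := rfl
      rw [heta]
      constructor
      · rintro ⟨hsum, -⟩
        have : (∑ i, l₀ i) + (∑ i, m i) = n * h := by
          rw [← Finset.sum_add_distrib]
          have : ∀ i : Fin n, l₀ i + m i = h := fun i => by rw [hl₀e]; have := hm i; omega
          rw [Finset.sum_congr rfl (fun i _ => this i)]
          simp [Finset.card_univ, mul_comm]
        omega
      · intro hsum
        refine ⟨?_, Finset.subset_univ _⟩
        have : (∑ i, l₀ i) + (∑ i, m i) = n * h := by
          rw [← Finset.sum_add_distrib]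
          have : ∀ i : Fin n, l₀ i + m i = h := fun i => by rw [hl₀e]; have := hm i; omega
          rw [Finset.sum_congr rfl (fun i _ => this i)]
          simp [Finset.card_univ, mul_comm]
        omega
    by_cases hN : (∑ i, m i) + N = n * h
    · rw [if_pos (hmem.mpr hN), if_pos hN]
    · rw [if_neg (fun hc => hN (hmem.mp hc)), if_neg hN]
  · have hz : ∀ l : Fin n →₀ ℕ, ¬ (∀ i, l i + m i = h) := by
      intro l hc
      exact hm (fun i => by have := hc i; omega)
    rw [Finset.sum_congr rfl (fun l _ => if_neg (hz l)), Finset.sum_const_zero]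
    obtain ⟨i₀, hi₀⟩ := not_forall.mp hm
    have : (h.choose (m i₀) : ℤ) = 0 := by
      rw [Nat.choose_eq_zero_of_lt (by omega)]; simp
    rw [Finset.prod_eq_zero (Finset.mem_univ i₀) this]
    simp


lemma sum_le_card_mul_eq {α : Type*} (s : Finset α) (f : α → ℕ) (h : ℕ)
    (hle : ∀ a ∈ s, f a ≤ h) (hsum : ∑ a ∈ s, f a = s.card * h) :
    ∀ a ∈ s, f a = h := by
  by_contra hcon
  push_neg at hcon
  obtain ⟨a, ha, hne⟩ := hcon
  have hlt : ∑ x ∈ s, f x < ∑ x ∈ s, h :=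
    Finset.sum_lt_sum (fun x hx => hle x hx) ⟨a, ha, lt_of_le_of_ne (hle a ha) hne⟩
  rw [Finset.sum_const, smul_eq_mul] at hlt
  omega

lemma sum_fin_ite (g t h : ℕ) (ht : t ≤ g) :
    (∑ u : Fin g, if (u : ℕ) < t then h else 0) = h * t := by
  rw [Fin.sum_univ_eq_sum_range (fun j => if j < t then h else 0)]
  rw [← Finset.sum_subset (Finset.range_subset_range.mpr ht)
      (fun x _ hx => by rw [Finset.mem_range] at hx; simp [if_neg hx])]
  rw [Finset.sum_congr rfl (fun x hx => if_pos (Finset.mem_range.mp hx))]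
  simp [mul_comm]

lemma sum_fin_ite2 (g c t h : ℕ) (ht : t ≤ g) :
    (∑ u : Fin g, if c < (u : ℕ) ∧ (u : ℕ) < t then h else 0) = h * (t - (c + 1)) := by
  rw [Fin.sum_univ_eq_sum_range (fun j => if c < j ∧ j < t then h else 0)]
  have hsub : Finset.Ico (c + 1) t ⊆ Finset.range g := fun x hx => by
    rw [Finset.mem_Ico] at hx; rw [Finset.mem_range]; omega
  rw [← Finset.sum_subset hsub (fun x _ hx => by
    rw [Finset.mem_Ico] at hx; rw [if_neg (by omega)])]
  have he : (∑ x ∈ Finset.Ico (c + 1) t, if c < x ∧ x < t then h else 0)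
      = ∑ x ∈ Finset.Ico (c + 1) t, h :=
    Finset.sum_congr rfl (fun x hx => by
      rw [Finset.mem_Ico] at hx; exact if_pos ⟨by omega, by omega⟩)
  rw [he, Finset.sum_const, Nat.card_Ico, smul_eq_mul, Nat.mul_comm]

lemma core_unique (p g h : ℕ) (hh : 2 * h + 1 = p) (hg : g + 1 ≤ h)
    (σ : Equiv.Perm (Fin g)) (k : Fin g → (Fin (2 * g + 1) →₀ ℕ))
    (hsum : ∀ i : Fin (2 * g + 1), (∑ u : Fin g, k u i) = h * (g - ((i : ℕ) + 1) / 2))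
    (hle : ∀ u i, k u i ≤ h)
    (hdeg : ∀ u : Fin g, (∑ i, k u i) + p * ((u : ℕ) + 1) = (2 * g + 1) * h + ((σ u : ℕ) + 1)) :
    ∀ u : Fin g, σ u = u ∧ ∀ i : Fin (2 * g + 1),
      k u i = if (u : ℕ) < g - ((i : ℕ) + 1) / 2 then h else 0 := by
  suffices H : ∀ d : ℕ, ∀ u : Fin g, g ≤ (u : ℕ) + d → (σ u = u ∧ ∀ i : Fin (2 * g + 1),
      k u i = if (u : ℕ) < g - ((i : ℕ) + 1) / 2 then h else 0) by
    intro u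
    exact H g u (by omega)
  intro d
  induction d with
  | zero => intro u hu; exact absurd hu (by have := u.isLt; omega)
  | succ d IH =>
    intro u hu
    by_cases hcase : g ≤ (u : ℕ) + d
    · exact IH u hcase
    set c := (u : ℕ) with hc
    have hclt : c < g := u.isLt
    -- (a) σ u ≤ c
    have ha : (σ u : ℕ) ≤ c := by
      by_contra hgt
      push_neg at hgt
      have hσw : σ (σ u) = σ u := (IH (σ u) (by omega)).1
      have heq : σ u = u := σ.injective hσw
      rw [heq] at hgt
      omega
    -- (b) for small i, every row u' with (u' : ℕ) ≤ c has k u' i = h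
    have hb : ∀ i : Fin (2 * g + 1), c < g - ((i : ℕ) + 1) / 2 →
        ∀ u' : Fin g, (u' : ℕ) ≤ c → k u' i = h := by
      intro i hti
      have hS : (∑ u' ∈ Finset.univ.filter (fun u' : Fin g => (u' : ℕ) ≤ c), k u' i)
          = (c + 1) * h := by
        have hsplit : (∑ u' ∈ Finset.univ.filter (fun u' : Fin g => (u' : ℕ) ≤ c), k u' i)
            + (∑ u' ∈ Finset.univ.filter (fun u' : Fin g => ¬ (u' : ℕ) ≤ c), k u' i)
            = ∑ u' : Fin g, k u' i :=
          Finset.sum_filter_add_sum_filter_not _ _ _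
        have hT : (∑ u' ∈ Finset.univ.filter (fun u' : Fin g => ¬ (u' : ℕ) ≤ c), k u' i)
            = h * ((g - ((i : ℕ) + 1) / 2) - (c + 1)) := by
          rw [Finset.sum_filter]
          have hcg : ∀ u' : Fin g, (if ¬ (u' : ℕ) ≤ c then k u' i else 0)
              = if c < (u' : ℕ) ∧ (u' : ℕ) < g - ((i : ℕ) + 1) / 2 then h else 0 := by
            intro u'
            by_cases hle' : (u' : ℕ) ≤ c
            · rw [if_neg (by omega), if_neg (by omega)]
            · rw [if_pos hle', (IH u' (by omega)).2 i]
              by_cases hlt' : (u' : ℕ) < g - ((i : ℕ) + 1) / 2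
              · rw [if_pos (by omega), if_pos (by omega)]
              · rw [if_neg (by omega), if_neg (by omega)]
          rw [Finset.sum_congr rfl (fun u' _ => hcg u')]
          exact sum_fin_ite2 g c _ h (by omega)
        have htot := hsum i
        have hexp : h * (g - ((i : ℕ) + 1) / 2)
            = h * ((g - ((i : ℕ) + 1) / 2) - (c + 1)) + h * (c + 1) := by
          rw [← Nat.mul_add, Nat.sub_add_cancel (by omega)]
        rw [hT, htot, hexp] at hsplit
        have : h * (c + 1) = (c + 1) * h := Nat.mul_comm _ _
        omega
      have hcard : (Finset.univ.filter (fun u' : Fin g => (u' : ℕ) ≤ c)).card = c + 1 := by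
        have h1 : (Finset.univ.filter (fun u' : Fin g => (u' : ℕ) ≤ c)).card
            = ∑ u' : Fin g, if (u' : ℕ) < c + 1 then 1 else 0 := by
          rw [Finset.card_filter]
          exact Finset.sum_congr rfl (fun u' _ =>
            if_congr (Nat.lt_succ_iff).symm rfl rfl)
        rw [h1, sum_fin_ite g (c + 1) 1 (by omega), Nat.one_mul]
      intro u' hu'
      exact sum_le_card_mul_eq _ _ h (fun a _ => hle a i)
        (by rw [hS, hcard]) u' (by simp [hu'])
    -- (c) conclude for row u
    have hsplit : (∑ i ∈ Finset.univ.filter (fun i : Fin (2 * g + 1) => c < g - ((i : ℕ) + 1) / 2), k u i)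
        + (∑ i ∈ Finset.univ.filter (fun i : Fin (2 * g + 1) => ¬ c < g - ((i : ℕ) + 1) / 2), k u i)
        = ∑ i : Fin (2 * g + 1), k u i :=
      Finset.sum_filter_add_sum_filter_not _ _ _
    have hSP : (∑ i ∈ Finset.univ.filter (fun i : Fin (2 * g + 1) => c < g - ((i : ℕ) + 1) / 2), k u i)
        = (2 * (g - c) - 1) * h := by
      rw [Finset.sum_congr rfl (fun i hi => hb i (Finset.mem_filter.mp hi).2 u (le_refl c))]
      rw [Finset.sum_const, smul_eq_mul]
      congr 1
      have h1 : (Finset.univ.filter (fun i : Fin (2 * g + 1) => c < g - ((i : ℕ) + 1) / 2)).card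
          = ∑ i : Fin (2 * g + 1), if (i : ℕ) < 2 * (g - c) - 1 then 1 else 0 := by
        rw [Finset.card_filter]
        exact Finset.sum_congr rfl (fun i _ => if_congr (by omega) rfl rfl)
      rw [h1, sum_fin_ite (2 * g + 1) (2 * (g - c) - 1) 1 (by omega), Nat.one_mul]
    have hdu := hdeg u
    rw [← hc] at hdu
    have hp1 : p * (c + 1) = (2 * c + 2) * h + (c + 1) := by rw [← hh]; ring
    have hn1 : (2 * g + 1) * h = (2 * (g - c) - 1) * h + (2 * c + 2) * h := by
      rw [← Nat.add_mul]
      congr 1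
      omega
    rw [← hsplit, hSP] at hdu
    have hrc : (∑ i ∈ Finset.univ.filter (fun i : Fin (2 * g + 1) => ¬ c < g - ((i : ℕ) + 1) / 2), k u i)
        + c = (σ u : ℕ) := by omega
    have hσu : σ u = u := Fin.ext (by omega)
    refine ⟨hσu, fun i => ?_⟩
    by_cases hPi : c < g - ((i : ℕ) + 1) / 2
    · rw [if_pos hPi]
      exact hb i hPi u (le_refl c)
    · rw [if_neg hPi]
      have hz : (∑ i ∈ Finset.univ.filter (fun i : Fin (2 * g + 1) => ¬ c < g - ((i : ℕ) + 1) / 2), k u i) = 0 := by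
        omega
      exact (Finset.sum_eq_zero_iff.mp hz) i (Finset.mem_filter.mpr ⟨Finset.mem_univ i, hPi⟩)



open Polynomial

/-- `F(t,z) = ((t-z_1)⋯(t-z_{2g+1}))^((p-1)/2)` as a polynomial in `t` over
`ℤ[z_1,…,z_{2g+1}]`. -/
noncomputable def masterF (p g : ℕ) : Polynomial (MvPolynomial (Fin (2 * g + 1)) ℤ) :=
  (∏ i : Fin (2 * g + 1), (X - C (MvPolynomial.X i))) ^ ((p - 1) / 2)

/-- The Hasse–Witt matrix `A(1,F) = (Cf_{pv-u} F)_{u,v ∈ {1,…,g}}`, where `Cf_k`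
extracts the coefficient of `t^k`. -/
noncomputable def hasseWittF (p g : ℕ) :
    Matrix (Fin g) (Fin g) (MvPolynomial (Fin (2 * g + 1)) ℤ) :=
  fun u v => (masterF p g).coeff (p * ((v : ℕ) + 1) - ((u : ℕ) + 1))

/-- for an odd prime `p > 2g+1`, the polynomial `det A(1, F(t,z))` is
nonzero modulo `p`: some coefficient of the determinant is not divisible by `p`. -/

theorem hasseWitt_det_nonzero_mod_p (p g : ℕ) (hp : p.Prime) (hodd : Odd p)
    (hpg : 2 * g + 1 < p) :
    ∃ m : Fin (2 * g + 1) →₀ ℕ,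
      ¬ (p : ℤ) ∣ MvPolynomial.coeff m (hasseWittF p g).det := by
  classical
  set n := 2 * g + 1 with hn
  set h := (p - 1) / 2 with hhdef
  have hh : 2 * h + 1 = p := by
    obtain ⟨t, ht⟩ := hodd
    omega
  have hg : g + 1 ≤ h := by omega
  -- target monomial and designated decomposition
  set M : Fin n →₀ ℕ :=
    Finsupp.equivFunOnFinite.symm (fun i => h * (g - ((i : ℕ) + 1) / 2)) with hM
  have hMa : ∀ i : Fin n, M i = h * (g - ((i : ℕ) + 1) / 2) := fun i => rfl
  set D : Fin g → (Fin n →₀ ℕ) := fun u =>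
    Finsupp.equivFunOnFinite.symm (fun i => if (u : ℕ) < g - ((i : ℕ) + 1) / 2 then h else 0)
    with hD
  have hDa : ∀ u i, D u i = if (u : ℕ) < g - ((i : ℕ) + 1) / 2 then h else 0 := fun u i => rfl
  set K₀ : Fin g →₀ (Fin n →₀ ℕ) := Finsupp.equivFunOnFinite.symm D with hK₀
  have hK₀a : ∀ u, K₀ u = D u := fun u => rfl
  -- entry coefficient formula
  have hentry : ∀ (N : ℕ) (m : Fin n →₀ ℕ),
      MvPolynomial.coeff m ((masterF p g).coeff N)
      = if (∑ i, m i) + N = n * h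
        then (-1 : ℤ) ^ (∑ i, m i) * ∏ i, ((h.choose (m i) : ℤ)) else 0 := by
    intro N m
    exact coeff_master n h N m
  -- uniqueness of nonzero contribution
  have key : ∀ (σ : Equiv.Perm (Fin g)) (k : Fin g →₀ (Fin n →₀ ℕ)),
      k ∈ Finset.finsuppAntidiag (univ : Finset (Fin g)) M →
      (∏ u : Fin g, MvPolynomial.coeff (k u) (hasseWittF p g (σ u) u)) ≠ 0 →
      σ = 1 ∧ k = K₀ := by
    intro σ k hk hne
    rw [Finset.prod_ne_zero_iff] at hne
    have hfacts : ∀ u : Fin g,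
        ((∑ i, k u i) + (p * ((u : ℕ) + 1) - ((σ u : ℕ) + 1)) = n * h)
        ∧ ∀ i, k u i ≤ h := by
      intro u
      have hne' := hne u (Finset.mem_univ u)
      rw [show hasseWittF p g (σ u) u
          = (masterF p g).coeff (p * ((u : ℕ) + 1) - ((σ u : ℕ) + 1)) from rfl] at hne'
      rw [hentry] at hne'
      by_cases hcond : (∑ i, k u i) + (p * ((u : ℕ) + 1) - ((σ u : ℕ) + 1)) = n * h
      · refine ⟨hcond, fun i => ?_⟩
        rw [if_pos hcond] at hne'
        by_contra hgt
        push_neg at hgt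
        apply hne'
        rw [Finset.prod_eq_zero (Finset.mem_univ i)
          (by rw [Nat.choose_eq_zero_of_lt hgt]; simp), mul_zero]
      · exact absurd (if_neg hcond) (fun e => hne' (by rw [e]))
    have hsum : ∀ i : Fin n, (∑ u : Fin g, k u i) = h * (g - ((i : ℕ) + 1) / 2) := by
      intro i
      rw [Finset.mem_finsuppAntidiag] at hk
      have := hk.1
      have happ : (∑ u : Fin g, k u) i = ∑ u : Fin g, k u i :=
        Finsupp.finset_sum_apply _ _ _
      rw [← happ, this, hMa]
    have hdeg : ∀ u : Fin g, (∑ i, k u i) + p * ((u : ℕ) + 1)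
        = n * h + ((σ u : ℕ) + 1) := by
      intro u
      have h1 := (hfacts u).1
      have h2 : (σ u : ℕ) < g := (σ u).isLt
      have h3 : g ≤ p := by omega
      have h4 : (σ u : ℕ) + 1 ≤ p * ((u : ℕ) + 1) :=
        le_trans (by omega) (Nat.le_mul_of_pos_right p (by omega))
      omega
    have hcore := core_unique p g h hh hg σ (fun u => k u) hsum (fun u i => (hfacts u).2 i) hdeg
    constructor
    · exact Equiv.ext (fun u => (hcore u).1)
    · refine Finsupp.ext (fun u => Finsupp.ext (fun i => ?_))
      rw [(hcore u).2 i, hK₀a, hDa]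
  -- membership of the designated decomposition
  have hK₀mem : K₀ ∈ Finset.finsuppAntidiag (univ : Finset (Fin g)) M := by
    rw [Finset.mem_finsuppAntidiag]
    refine ⟨Finsupp.ext (fun i => ?_), Finset.subset_univ _⟩
    have happ : (∑ u : Fin g, K₀ u) i = ∑ u : Fin g, K₀ u i :=
      Finsupp.finset_sum_apply _ _ _
    rw [show (univ.sum ⇑K₀) = ∑ u : Fin g, K₀ u from rfl, happ, hMa]
    rw [Finset.sum_congr rfl (fun u _ => by rw [hK₀a, hDa])]
    exact sum_fin_ite g (g - ((i : ℕ) + 1) / 2) h (by omega)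
  -- the value of the designated term
  have hval : ∀ u : Fin g,
      MvPolynomial.coeff (K₀ u) (hasseWittF p g u u)
        = (-1 : ℤ) ^ (h * (2 * (g - (u : ℕ)) - 1)) := by
    intro u
    rw [show hasseWittF p g u u
        = (masterF p g).coeff (p * ((u : ℕ) + 1) - ((u : ℕ) + 1)) from rfl, hentry]
    have hu := u.isLt
    have hsumD : (∑ i, K₀ u i) = h * (2 * (g - (u : ℕ)) - 1) := by
      have h1 : (∑ i, K₀ u i)
          = ∑ i : Fin n, if (i : ℕ) < 2 * (g - (u : ℕ)) - 1 then h else 0 :=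
        Finset.sum_congr rfl (fun i _ => by
          rw [hK₀a, hDa]
          exact if_congr (by omega : ((u : ℕ) < g - ((i : ℕ) + 1) / 2) ↔ ((i : ℕ) < 2 * (g - (u : ℕ)) - 1)) rfl rfl)
      rw [h1]
      exact sum_fin_ite n (2 * (g - (u : ℕ)) - 1) h (by omega)
    have hcond : (∑ i, K₀ u i) + (p * ((u : ℕ) + 1) - ((u : ℕ) + 1)) = n * h := by
      rw [hsumD]
      obtain ⟨b, hb⟩ : ∃ b, g = (u : ℕ) + b + 1 := ⟨g - (u : ℕ) - 1, by omega⟩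
      have e1 : p * ((u : ℕ) + 1) = 2 * (h * ((u : ℕ) + 1)) + ((u : ℕ) + 1) := by
        rw [← hh]; ring
      have e4 : 2 * (g - (u : ℕ)) - 1 = 2 * b + 1 := by omega
      have e5 : n * h = (2 * (u : ℕ) + 2 * b + 3) * h := by
        congr 1
        omega
      have e6 : h * (2 * b + 1) + 2 * (h * ((u : ℕ) + 1)) = (2 * (u : ℕ) + 2 * b + 3) * h := by
        ring
      rw [e4, e5]
      omega
    have hprod : (∏ i, ((h.choose (K₀ u i) : ℤ))) = 1 :=
      Finset.prod_eq_one (fun i _ => by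
        rw [hK₀a, hDa]
        by_cases hc : (u : ℕ) < g - ((i : ℕ) + 1) / 2
        · rw [if_pos hc, Nat.choose_self]; exact Nat.cast_one
        · rw [if_neg hc, Nat.choose_zero_right]; exact Nat.cast_one)
    rw [if_pos hcond, hprod, mul_one, hsumD]
  -- assemble
  refine ⟨M, ?_⟩
  have hdet : MvPolynomial.coeff M (hasseWittF p g).det
      = ∑ σ : Equiv.Perm (Fin g), Equiv.Perm.sign σ •
          ∑ k ∈ Finset.finsuppAntidiag (univ : Finset (Fin g)) M,
            ∏ u : Fin g, MvPolynomial.coeff (k u) (hasseWittF p g (σ u) u) := by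
    rw [Matrix.det_apply, MvPolynomial.coeff_sum]
    exact Finset.sum_congr rfl (fun σ _ => by
      rw [MvPolynomial.coeff_smul, mv_coeff_prod])
  rw [hdet]
  rw [Finset.sum_eq_single (1 : Equiv.Perm (Fin g))]
  · rw [Finset.sum_eq_single_of_mem K₀ hK₀mem]
    · rw [Finset.prod_congr rfl (fun u _ => by
        rw [show (1 : Equiv.Perm (Fin g)) u = u from rfl, hval u])]
      rw [Finset.prod_pow_eq_pow_sum]
      simp only [Equiv.Perm.sign_one, one_smul]
      intro hdvd
      rcases Nat.even_or_odd (∑ u : Fin g, h * (2 * (g - (u : ℕ)) - 1)) with he | ho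
      · rw [Even.neg_one_pow he] at hdvd
        have := Int.le_of_dvd one_pos hdvd
        omega
      · rw [Odd.neg_one_pow ho] at hdvd
        rw [Int.dvd_neg] at hdvd
        have := Int.le_of_dvd one_pos hdvd
        omega
    · intro k hk hkne
      by_contra hne
      exact hkne (key 1 k hk hne).2
  · intro σ _ hσne
    have : (∑ k ∈ Finset.finsuppAntidiag (univ : Finset (Fin g)) M,
        ∏ u : Fin g, MvPolynomial.coeff (k u) (hasseWittF p g (σ u) u)) = 0 := by
      apply Finset.sum_eq_zero
      intro k hk
      by_contra hne
      exact hσne (key σ k hk hne).1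
    rw [this, smul_zero]
  · intro hmem
    exact absurd (Finset.mem_univ 1) hmem
end
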